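/- arXiv:2208.15000 — 3 statements merged into one kernel-verified Lean document; each statement's English description precedes it below -/
import Mathlib

section
/- Let Q be a finite quiver and M a thin representation of Q over a field K. For every filtration 0 = M_0 ⊂ M_1 ⊂ ⋯ ⊂ M_r = M of M by subrepresentations such that every successive quotient S_i = M_i/M_{i−1} is indecomposable, there exists v ∈ R^{Q0} such that every factor S_i is v-stable; in particular the given filtration is a filtration of M all of whose factors are v-stable representations. -/
attribute [local instance] Classical.propDecidable

/-- A finite quiver: finite sets of vertices and arrows with source and target maps. -/
structure FinQuiver where
  V : Type
  A : Type
  [fintypeV : Fintype V]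
  [decEqV : DecidableEq V]
  [fintypeA : Fintype A]
  [decEqA : DecidableEq A]
  s : A → V
  t : A → V

attribute [instance] FinQuiver.fintypeV FinQuiver.decEqV FinQuiver.fintypeA FinQuiver.decEqA

/-- A finite-dimensional representation of a finite quiver over a field `K`. -/
structure QRep (K : Type) [Field K] (Q : FinQuiver) where
  M : Q.V → Type
  [acg : ∀ i, AddCommGroup (M i)]
  [mod : ∀ i, Module K (M i)]
  [fd : ∀ i, FiniteDimensional K (M i)]
  φ : ∀ a : Q.A, M (Q.s a) →ₗ[K] M (Q.t a)

attribute [instance] QRep.acg QRep.mod QRep.fd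

/-- A subrepresentation: a subspace at every vertex, compatible with the arrow maps. -/
structure QSubRep {K : Type} [Field K] {Q : FinQuiver} (R : QRep K Q) where
  L : ∀ i, Submodule K (R.M i)
  compat : ∀ a : Q.A, ∀ x ∈ L (Q.s a), R.φ a x ∈ L (Q.t a)

def QSubRep.le {K : Type} [Field K] {Q : FinQuiver} {R : QRep K Q} (N N' : QSubRep R) : Prop :=
  ∀ i, N.L i ≤ N'.L i

/-- The dimension vector of a representation. -/
noncomputable def QRep.dimVec {K : Type} [Field K] {Q : FinQuiver} (R : QRep K Q) (i : Q.V) : ℕ :=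
  Module.finrank K (R.M i)

/-- Standard inner product of a real vector with a dimension vector. -/
def stabInner {Q : FinQuiver} (v : Q.V → ℝ) (d : Q.V → ℕ) : ℝ :=
  ∑ i, v i * (d i : ℝ)

/-- `v`-semistability of a representation. -/
def IsSemistable {K : Type} [Field K] {Q : FinQuiver} (R : QRep K Q) (v : Q.V → ℝ) : Prop :=
  stabInner v R.dimVec = 0 ∧
    ∀ N : QSubRep R, stabInner v (fun i => Module.finrank K (N.L i)) ≤ 0

/-- The stability space of a representation. -/
def stabSpace {K : Type} [Field K] {Q : FinQuiver} (R : QRep K Q) : Set (Q.V → ℝ) :=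
  {v | IsSemistable R v}

/-- `v`-stability of a representation. -/
def IsStable {K : Type} [Field K] {Q : FinQuiver} (R : QRep K Q) (v : Q.V → ℝ) : Prop :=
  stabInner v R.dimVec = 0 ∧
    ∀ N : QSubRep R, (∃ i, N.L i ≠ ⊥) → (∃ i, N.L i ≠ ⊤) →
      stabInner v (fun i => Module.finrank K (N.L i)) < 0

/-- The thin sincere representation with identity maps: `K` at every vertex. -/
noncomputable def thinRep (K : Type) [Field K] (Q : FinQuiver) : QRep K Q where
  M _ := K
  φ _ := LinearMap.id

/-- The set of all finite non-negative real linear combinations of elements of `X`. -/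
def coneSpan {E : Type} [AddCommMonoid E] [Module ℝ E] (X : Set E) : Set E :=
  {x | ∃ (n : ℕ) (c : Fin n → ℝ) (f : Fin n → E),
    (∀ j, 0 ≤ c j) ∧ (∀ j, f j ∈ X) ∧ x = ∑ j, c j • f j}

/-- The standard basis vector of `ℝ^{Q₀}` at a vertex. -/
noncomputable def eVec (Q : FinQuiver) (i : Q.V) : Q.V → ℝ := Pi.single i 1

/-- A subrepresentation viewed as a representation in its own right. -/
noncomputable def QSubRep.toRep {K : Type} [Field K] {Q : FinQuiver} {R : QRep K Q}
    (N : QSubRep R) : QRep K Q where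
  M i := ↥(N.L i)
  φ a := (R.φ a).restrict (fun x hx => N.compat a x hx)

/-- The quotient of a representation by a subrepresentation. -/
noncomputable def QRep.quotBy {K : Type} [Field K] {Q : FinQuiver} (R : QRep K Q)
    (N : QSubRep R) : QRep K Q where
  M i := R.M i ⧸ N.L i
  φ a := Submodule.mapQ _ _ (R.φ a) (fun x hx => N.compat a x hx)

/-- The quotient `N'/N` of nested subrepresentations, as a representation. -/
noncomputable def quotRep {K : Type} [Field K] {Q : FinQuiver} (R : QRep K Q)
    (N N' : QSubRep R) (h : QSubRep.le N N') : QRep K Q where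
  M i := ↥(N'.L i) ⧸ Submodule.comap (N'.L i).subtype (N.L i)
  φ a := Submodule.mapQ _ _ ((R.φ a).restrict (fun x hx => N'.compat a x hx))
    (by
      intro x hx
      simp only [Submodule.mem_comap, Submodule.subtype_apply,
        LinearMap.restrict_apply] at hx ⊢
      exact N.compat a _ hx)

/-- A representation is nonzero if some vertex space is nonzero. -/
def QRep.Nonzero {K : Type} [Field K] {Q : FinQuiver} (R : QRep K Q) : Prop :=
  ∃ i, Module.finrank K (R.M i) ≠ 0

/-- Indecomposability: nonzero and admitting no internal direct sum decomposition into two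
nonzero subrepresentations. -/
def Indecomposable {K : Type} [Field K] {Q : FinQuiver} (R : QRep K Q) : Prop :=
  R.Nonzero ∧
    ¬∃ U W : QSubRep R, (∃ i, U.L i ≠ ⊥) ∧ (∃ i, W.L i ≠ ⊥) ∧
      (∀ i, U.L i ⊓ W.L i = ⊥) ∧ (∀ i, U.L i ⊔ W.L i = ⊤)

/-- Isomorphism of representations. -/
def RepIso {K : Type} [Field K] {Q : FinQuiver} (R R' : QRep K Q) : Prop :=
  ∃ f : ∀ i, R.M i ≃ₗ[K] R'.M i,
    ∀ (a : Q.A) (x : R.M (Q.s a)), f (Q.t a) (R.φ a x) = R'.φ a (f (Q.s a) x)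

/-- The support of a representation. -/
def QRep.supp {K : Type} [Field K] {Q : FinQuiver} (R : QRep K Q) : Set Q.V :=
  {i | Module.finrank K (R.M i) ≠ 0}

/-- The stability space restricted to the coordinate subspace of the support. -/
def Dsupp {K : Type} [Field K] {Q : FinQuiver} (R : QRep K Q) : Set (Q.V → ℝ) :=
  stabSpace R ∩ {v | ∀ i, i ∉ R.supp → v i = 0}

/-- Standard inner product on `ℝ^V`. -/
def rInner {V : Type} [Fintype V] (a v : V → ℝ) : ℝ := ∑ i, a i * v i

/-- A face of a polyhedral cone. -/
def IsFace {V : Type} [Fintype V] (C F : Set (V → ℝ)) : Prop :=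
  ∃ a : V → ℝ, (∀ v ∈ C, rInner a v ≤ 0) ∧ F = C ∩ {v | rInner a v = 0}

/-- The dimension of the linear span of a subset of `ℝ^V`. -/
noncomputable def coneDim {V : Type} [Fintype V] (F : Set (V → ℝ)) : ℕ :=
  Module.finrank ℝ ↥(Submodule.span ℝ F)

/-- A facet: a face of codimension one. -/
def IsFacet {V : Type} [Fintype V] (C F : Set (V → ℝ)) : Prop :=
  IsFace C F ∧ coneDim F + 1 = coneDim C

/-- Composability of a list of arrows (a directed path). -/
def PathComposable {Q : FinQuiver} : List Q.A → Prop
  | [] => True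
  | [_] => True
  | a :: b :: l => Q.t a = Q.s b ∧ PathComposable (b :: l)


open Module in
/-- In a thin rep, a nonzero subspace at a vertex is everything. -/
lemma aux_sub_eq_top {K : Type} [Field K] {Q : FinQuiver} {S : QRep K Q}
    (hS : ∀ i, finrank K (S.M i) ≤ 1)
    {N : QSubRep S} {i : Q.V} (h : N.L i ≠ ⊥) : N.L i = ⊤ := by
  have h1 : 1 ≤ finrank K (N.L i) := by
    by_contra h'
    exact h (Submodule.finrank_eq_zero.mp (by omega))
  have h2 : finrank K (N.L i) ≤ finrank K (S.M i) := Submodule.finrank_le _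
  exact Submodule.eq_top_of_finrank_eq (by have := hS i; omega)

open Module in
lemma aux_supp_of_phi_ne {K : Type} [Field K] {Q : FinQuiver} {S : QRep K Q} {a : Q.A}
    (ha : S.φ a ≠ 0) :
    finrank K (S.M (Q.s a)) ≠ 0 ∧ finrank K (S.M (Q.t a)) ≠ 0 := by
  obtain ⟨x, hx⟩ := DFunLike.ne_iff.mp ha
  simp only [LinearMap.zero_apply] at hx
  constructor
  · intro h0
    have := Module.finrank_zero_iff.mp h0
    exact hx (by rw [Subsingleton.elim x 0, map_zero])
  · intro h0
    have := Module.finrank_zero_iff.mp h0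
    exact hx (Subsingleton.elim _ 0)

open Module in
lemma aux_rank_mono {K : Type} [Field K] {Q : FinQuiver} {S : QRep K Q}
    (hS : ∀ i, finrank K (S.M i) ≤ 1)
    (N : QSubRep S) {a : Q.A} (ha : S.φ a ≠ 0) :
    finrank K (N.L (Q.s a)) ≤ finrank K (N.L (Q.t a)) := by
  by_cases hb : N.L (Q.s a) = ⊥
  · rw [hb, finrank_bot]
    exact Nat.zero_le _
  · have htop := aux_sub_eq_top hS hb
    obtain ⟨x, hx⟩ := DFunLike.ne_iff.mp ha
    simp only [LinearMap.zero_apply] at hx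
    have hmem : S.φ a x ∈ N.L (Q.t a) := N.compat a x (htop ▸ Submodule.mem_top)
    have hnb : N.L (Q.t a) ≠ ⊥ := by
      intro h
      rw [h, Submodule.mem_bot] at hmem
      exact hx hmem
    have h1 : 1 ≤ finrank K (N.L (Q.t a)) := by
      by_contra h'
      exact hnb (Submodule.finrank_eq_zero.mp (by omega))
    have h2 : finrank K (N.L (Q.s a)) ≤ finrank K (S.M (Q.s a)) := Submodule.finrank_le _
    have := hS (Q.s a)
    omega

open Module in
/-- An indecomposable thin rep: every nonzero proper subrep has an "entering arrow". -/
lemma aux_enter {K : Type} [Field K] {Q : FinQuiver} {S : QRep K Q}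
    (hS : ∀ i, finrank K (S.M i) ≤ 1)
    (hind : Indecomposable S) (N : QSubRep S)
    (hne : ∃ i, N.L i ≠ ⊥) (hpr : ∃ i, N.L i ≠ ⊤) :
    ∃ a, S.φ a ≠ 0 ∧ N.L (Q.s a) = ⊥ ∧ N.L (Q.t a) ≠ ⊥ := by
  by_contra hcon
  push_neg at hcon
  apply hind.2
  refine ⟨N, ⟨fun i => if finrank K (S.M i) ≠ 0 ∧ N.L i = ⊥ then ⊤ else ⊥, ?_⟩, hne, ?_, ?_, ?_⟩
  · intro a x hx
    by_cases hs : finrank K (S.M (Q.s a)) ≠ 0 ∧ N.L (Q.s a) = ⊥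
    · by_cases hφ : S.φ a = 0
      · have : S.φ a x = 0 := by rw [hφ]; rfl
        rw [this]; exact Submodule.zero_mem _
      · have ht : N.L (Q.t a) = ⊥ := hcon a hφ hs.2
        have hts : finrank K (S.M (Q.t a)) ≠ 0 := (aux_supp_of_phi_ne hφ).2
        simp only [if_pos (And.intro hts ht)]
        exact Submodule.mem_top
    · simp only [if_neg hs, Submodule.mem_bot] at hx
      rw [hx, map_zero]
      exact Submodule.zero_mem _
  · obtain ⟨i, hi⟩ := hpr
    have hnz : finrank K (S.M i) ≠ 0 := by
      intro h0
      have := Module.finrank_zero_iff.mp h0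
      exact hi (Subsingleton.elim _ _)
    have hbot : N.L i = ⊥ := by
      by_contra h
      exact hi (aux_sub_eq_top hS h)
    refine ⟨i, ?_⟩
    simp only [if_pos (And.intro hnz hbot)]
    have : Nontrivial (S.M i) := Module.nontrivial_of_finrank_pos (R := K) (by omega)
    intro htb
    obtain ⟨x, hx⟩ := exists_ne (0 : S.M i)
    have hxt : x ∈ (⊤ : Submodule K (S.M i)) := Submodule.mem_top
    rw [htb, Submodule.mem_bot] at hxt
    exact hx hxt
  · intro i
    by_cases h : finrank K (S.M i) ≠ 0 ∧ N.L i = ⊥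
    · simp [if_pos h, h.2]
    · simp [if_neg h]
  · intro i
    by_cases h : finrank K (S.M i) ≠ 0 ∧ N.L i = ⊥
    · simp [if_pos h]
    · simp only [if_neg h]
      push_neg at h
      by_cases h0 : finrank K (S.M i) = 0
      · have := Module.finrank_zero_iff.mp h0
        exact Subsingleton.elim _ _
      · rw [aux_sub_eq_top hS (h h0)]
        simp

/-- For a thin representation `R` of a finite quiver, every filtration of
`R` by subrepresentations with indecomposable successive quotients is the filtration by
`v`-stable factors for some stability condition `v`. -/
theorem filtration_of_thin_module_is_stable_filtration (K : Type) [Field K] (Q : FinQuiver)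
    (R : QRep K Q) (hthin : ∀ i, Module.finrank K (R.M i) ≤ 1)
    (r : ℕ) (F : Fin (r + 1) → QSubRep R)
    (h0 : ∀ i, (F 0).L i = ⊥) (hlast : ∀ i, (F (Fin.last r)).L i = ⊤)
    (hmono : ∀ j : Fin r, QSubRep.le (F j.castSucc) (F j.succ))
    (hstrict : ∀ j : Fin r, F j.castSucc ≠ F j.succ)
    (hind : ∀ j : Fin r, Indecomposable (quotRep R (F j.castSucc) (F j.succ) (hmono j))) :
    ∃ v : Q.V → ℝ, ∀ j : Fin r,
      IsStable (quotRep R (F j.castSucc) (F j.succ) (hmono j)) v := by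
    classical
  open Module in
  set Sq : Fin r → QRep K Q := fun j => quotRep R (F j.castSucc) (F j.succ) (hmono j) with hSq
  have hdim : ∀ (j : Fin r) (i : Q.V),
      Module.finrank K ((Sq j).M i) + Module.finrank K ((F j.castSucc).L i)
        = Module.finrank K ((F j.succ).L i) := by
    intro j i
    have h1 := Submodule.finrank_quotient_add_finrank
      (Submodule.comap ((F j.succ).L i).subtype ((F j.castSucc).L i))
    have h2 := (Submodule.comapSubtypeEquivOfLe (hmono j i)).finrank_eq
    rw [h2] at h1
    exact h1
  have hRle : ∀ (k : Fin (r+1)) (i : Q.V), Module.finrank K ((F k).L i) ≤ 1 := fun k i =>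
    le_trans (Submodule.finrank_le _) (hthin i)
  have hthinq : ∀ (j : Fin r) (i : Q.V), Module.finrank K ((Sq j).M i) ≤ 1 := by
    intro j i
    have h1 := hdim j i
    have h2 := hRle j.succ i
    omega
  have hchain : ∀ (m : ℕ) (hm : m ≤ r) (k : Fin (r+1)), k.val ≤ m → ∀ i,
      (F k).L i ≤ (F ⟨m, by omega⟩).L i := by
    intro m
    induction m with
    | zero =>
      intro hm k hk i
      have hk0 : k = ⟨0, by omega⟩ := Fin.ext (show k.val = 0 by omega)
      rw [hk0]
    | succ n ih =>
      intro hm k hk i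
      by_cases h : k.val ≤ n
      · refine le_trans (ih (by omega) k h i) ?_
        have hstep := hmono ⟨n, by omega⟩ i
        exact hstep
      · have hk1 : k = ⟨n+1, by omega⟩ := Fin.ext (show k.val = n+1 by omega)
        rw [hk1]
  have hkey : ∀ (i : Q.V) (j j' : Fin r), j < j' →
      Module.finrank K ((Sq j).M i) ≠ 0 → Module.finrank K ((Sq j').M i) = 0 := by
    intro i j j' hlt hj
    by_contra hj'
    have h1 := hdim j i
    have h2 := hdim j' i
    have hle : (F j.succ).L i ≤ (F j'.castSucc).L i := by
      have h := hchain j'.val (by omega) j.succ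
        (by simp only [Fin.val_succ]; exact hlt) i
      exact h
    have h3 : Module.finrank K ((F j.succ).L i) ≤ Module.finrank K ((F j'.castSucc).L i) :=
      Submodule.finrank_mono hle
    have h4 := hRle j'.succ i
    omega
  have hdisj : ∀ (i : Q.V) (j j' : Fin r), Module.finrank K ((Sq j).M i) ≠ 0 →
      Module.finrank K ((Sq j').M i) ≠ 0 → j = j' := by
    intro i j j' hj hj'
    rcases lt_trichotomy j j' with h | h | h
    · exact absurd (hkey i j j' h hj) hj'
    · exact h
    · exact absurd (hkey i j' j h hj') hj
  set v : Q.V → ℝ := fun i => ∑ j : Fin r, ∑ a : Q.A,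
      if (Sq j).φ a ≠ 0
      then ((if Q.s a = i then (1:ℝ) else 0) - (if Q.t a = i then (1:ℝ) else 0)) else 0
    with hv
  refine ⟨v, ?_⟩
  intro j0
  have hIP : ∀ d : Q.V → ℕ, (∀ i, Module.finrank K ((Sq j0).M i) = 0 → d i = 0) →
      stabInner v d
        = ∑ a : Q.A, if (Sq j0).φ a ≠ 0
            then ((d (Q.s a) : ℝ) - (d (Q.t a) : ℝ)) else 0 := by
    intro d hd
    have key : ∀ (j : Fin r) (a : Q.A),
        (∑ i : Q.V, (if (Sq j).φ a ≠ 0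
            then ((if Q.s a = i then (1:ℝ) else 0) - (if Q.t a = i then (1:ℝ) else 0))
            else 0) * (d i : ℝ))
        = if (Sq j).φ a ≠ 0 then ((d (Q.s a) : ℝ) - (d (Q.t a) : ℝ)) else 0 := by
      intro j a
      by_cases hc : (Sq j).φ a ≠ 0
      · simp only [if_pos hc, sub_mul, ite_mul, one_mul, zero_mul,
          Finset.sum_sub_distrib, Finset.sum_ite_eq, Finset.mem_univ, if_true]
      · simp [if_neg hc]
    unfold stabInner
    simp only [hv]
    simp_rw [Finset.sum_mul]
    rw [Finset.sum_comm]
    have e1 : ∀ j : Fin r,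
        (∑ i : Q.V, ∑ a : Q.A, (if (Sq j).φ a ≠ 0
            then ((if Q.s a = i then (1:ℝ) else 0) - (if Q.t a = i then (1:ℝ) else 0))
            else 0) * (d i : ℝ))
        = ∑ a : Q.A, if (Sq j).φ a ≠ 0 then ((d (Q.s a) : ℝ) - (d (Q.t a) : ℝ)) else 0 := by
      intro j
      rw [Finset.sum_comm]
      exact Finset.sum_congr rfl fun a _ => key j a
    rw [Finset.sum_congr rfl fun j _ => e1 j]
    rw [Finset.sum_eq_single j0]
    · intro j _ hj
      apply Finset.sum_eq_zero
      intro a _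
      by_cases hc : (Sq j).φ a ≠ 0
      · rw [if_pos hc]
        have hs := (aux_supp_of_phi_ne hc).1
        have ht := (aux_supp_of_phi_ne hc).2
        have hs0 : d (Q.s a) = 0 := hd _ (by
          by_contra h
          exact hj (hdisj _ j j0 hs h))
        have ht0 : d (Q.t a) = 0 := hd _ (by
          by_contra h
          exact hj (hdisj _ j j0 ht h))
        simp [hs0, ht0]
      · rw [if_neg hc]
    · intro h
      exact absurd (Finset.mem_univ _) h
  refine ⟨?_, ?_⟩
  · rw [hIP ((Sq j0).dimVec) (fun i h => h)]
    apply Finset.sum_eq_zero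
    intro a _
    by_cases hc : (Sq j0).φ a ≠ 0
    · rw [if_pos hc]
      have hs := (aux_supp_of_phi_ne hc).1
      have ht := (aux_supp_of_phi_ne hc).2
      have h1 := hthinq j0 (Q.s a)
      have h2 := hthinq j0 (Q.t a)
      have e1 : (Sq j0).dimVec (Q.s a) = 1 := by
        unfold QRep.dimVec at *
        omega
      have e2 : (Sq j0).dimVec (Q.t a) = 1 := by
        unfold QRep.dimVec at *
        omega
      rw [e1, e2]
      norm_num
    · rw [if_neg hc]
  · intro N hne hpr
    have hdN : ∀ i, Module.finrank K ((Sq j0).M i) = 0 →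
        (fun i => Module.finrank K (N.L i)) i = 0 := by
      intro i h
      have h1 : Module.finrank K (N.L i) ≤ Module.finrank K ((Sq j0).M i) :=
        Submodule.finrank_le _
      show Module.finrank K (N.L i) = 0
      omega
    rw [hIP (fun i => Module.finrank K (N.L i)) hdN]
    obtain ⟨a0, ha0, hs0, ht0⟩ := aux_enter (hthinq j0) (hind j0) N hne hpr
    have hterm : ∀ a ∈ (Finset.univ : Finset Q.A),
        (if (Sq j0).φ a ≠ 0
          then ((Module.finrank K (N.L (Q.s a)) : ℝ) - (Module.finrank K (N.L (Q.t a)) : ℝ))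
          else 0) ≤ (fun _ : Q.A => (0:ℝ)) a := by
      intro a _
      by_cases hc : (Sq j0).φ a ≠ 0
      · rw [if_pos hc]
        have := aux_rank_mono (hthinq j0) N hc
        simp only
        have : (Module.finrank K (N.L (Q.s a)) : ℝ) ≤ (Module.finrank K (N.L (Q.t a)) : ℝ) := by
          exact_mod_cast this
        linarith
      · rw [if_neg hc]
    have hstrict0 : (if (Sq j0).φ a0 ≠ 0
          then ((Module.finrank K (N.L (Q.s a0)) : ℝ) - (Module.finrank K (N.L (Q.t a0)) : ℝ))
          else 0) < (fun _ : Q.A => (0:ℝ)) a0 := by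
      rw [if_pos ha0, hs0, finrank_bot]
      have h0 : Module.finrank K (N.L (Q.t a0)) ≠ 0 := fun hz =>
        ht0 (Submodule.finrank_eq_zero.mp hz)
      have h1 : 1 ≤ Module.finrank K (N.L (Q.t a0)) := by omega
      have h2 : (1:ℝ) ≤ (Module.finrank K (N.L (Q.t a0)) : ℝ) := by exact_mod_cast h1
      simp only [Nat.cast_zero]
      linarith
    calc (∑ a : Q.A, if (Sq j0).φ a ≠ 0
            then ((Module.finrank K (N.L (Q.s a)) : ℝ) - (Module.finrank K (N.L (Q.t a)) : ℝ))
            else 0)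
        < ∑ _a : Q.A, (0:ℝ) :=
          Finset.sum_lt_sum hterm ⟨a0, Finset.mem_univ _, hstrict0⟩
      _ = 0 := by simp
end

section
/- Let Q be a finite quiver with connected underlying graph and let M be a thin sincere representation of Q over a field K all of whose arrow maps are nonzero (so that M is indecomposable). Then the facets of the polyhedral cone D(M) are precisely the sets F_L = {v ∈ R^{Q0} : both L and M/L are v-semistable}, where L ranges over the nonzero proper subrepresentations of M such that both L and the quotient M/L are indecomposable; moreover, under the coordinate decomposition R^{Q0} = R^{supp L} × R^{supp M/L}, one has F_L = D_supp(L) × D_supp(M/L). -/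
attribute [local instance] Classical.propDecidable

/-- Connectivity of the underlying graph of a quiver. -/
def FinQuiver.Connected (Q : FinQuiver) : Prop :=
  Nonempty Q.V ∧ ∀ i j : Q.V, Relation.ReflTransGen
    (fun x y => ∃ a, (Q.s a = x ∧ Q.t a = y) ∨ (Q.s a = y ∧ Q.t a = x)) i j

open Finset Module

section Thin

variable {K : Type} [Field K] {Q : FinQuiver}

/-- `T` is a closed subset of `X`: arrows starting in `T` whose target lies in `X` end in `T`. -/
def FClosed (Q : FinQuiver) (X T : Finset Q.V) : Prop :=
  T ⊆ X ∧ ∀ a : Q.A, Q.s a ∈ T → Q.t a ∈ X → Q.t a ∈ T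

/-- Connectivity of the induced graph on `X`. -/
def ConnIn (Q : FinQuiver) (X : Finset Q.V) : Prop :=
  X.Nonempty ∧ ∀ i ∈ X, ∀ j ∈ X, Relation.ReflTransGen
    (fun x y => ∃ a, ((Q.s a = x ∧ Q.t a = y) ∨ (Q.s a = y ∧ Q.t a = x)) ∧
      Q.s a ∈ X ∧ Q.t a ∈ X) i j

/-- `R` is a thin representation with support `X` and nonzero maps along arrows inside `X`. -/
def ThinOn (R : QRep K Q) (X : Finset Q.V) : Prop :=
  (∀ i, finrank K (R.M i) = if i ∈ X then 1 else 0) ∧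
    (∀ a : Q.A, Q.s a ∈ X → Q.t a ∈ X → R.φ a ≠ 0)

variable {R : QRep K Q} {X : Finset Q.V}

lemma ThinOn.subsingleton (h : ThinOn R X) {i : Q.V} (hi : i ∉ X) : Subsingleton (R.M i) := by
  have := h.1 i
  rw [if_neg hi] at this
  exact finrank_zero_iff.mp this

lemma ThinOn.nontrivial (h : ThinOn R X) {i : Q.V} (hi : i ∈ X) : Nontrivial (R.M i) := by
  have := h.1 i
  rw [if_pos hi] at this
  exact finrank_pos_iff.mp (by rw [this]; norm_num)

/-- The support of a subrepresentation, as a finset. -/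
noncomputable def QSubRep.suppF (N : QSubRep R) : Finset Q.V :=
  Finset.univ.filter (fun i => N.L i ≠ ⊥)

lemma ThinOn.bot_of_not_mem (h : ThinOn R X) (N : QSubRep R) {i : Q.V} (hi : i ∉ X) :
    N.L i = ⊥ := by
  have := h.subsingleton hi
  exact Subsingleton.elim _ _

lemma ThinOn.suppF_subset (h : ThinOn R X) (N : QSubRep R) : N.suppF ⊆ X := by
  intro i hi
  by_contra hx
  exact (mem_filter.mp hi).2 (h.bot_of_not_mem N hx)

lemma ThinOn.eq_top_of_mem_suppF (h : ThinOn R X) (N : QSubRep R) {i : Q.V}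
    (hi : i ∈ N.suppF) : N.L i = ⊤ := by
  have hne : N.L i ≠ ⊥ := (mem_filter.mp hi).2
  have hiX : i ∈ X := h.suppF_subset N hi
  have h1 : finrank K (R.M i) = 1 := by simpa [hiX] using h.1 i
  have hle : finrank K (N.L i) ≤ 1 := h1 ▸ Submodule.finrank_le (N.L i)
  have hpos : finrank K (N.L i) ≠ 0 := fun hz => hne (Submodule.finrank_eq_zero.mp hz)
  exact Submodule.eq_top_of_finrank_eq (by omega)

lemma ThinOn.finrank_suppF (h : ThinOn R X) (N : QSubRep R) (i : Q.V) :
    finrank K (N.L i) = if i ∈ N.suppF then 1 else 0 := by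
  by_cases hi : i ∈ N.suppF
  · rw [if_pos hi, h.eq_top_of_mem_suppF N hi]
    have hiX : i ∈ X := h.suppF_subset N hi
    have h1 : finrank K (R.M i) = 1 := by simpa [hiX] using h.1 i
    rw [finrank_top]; exact h1
  · rw [if_neg hi]
    have : N.L i = ⊥ := by
      by_contra hne
      exact hi (mem_filter.mpr ⟨mem_univ i, hne⟩)
    rw [this]; simp

lemma ThinOn.suppF_closed (h : ThinOn R X) (N : QSubRep R) : FClosed Q X N.suppF := by
  refine ⟨h.suppF_subset N, fun a hs ht => ?_⟩
  have hsX : Q.s a ∈ X := h.suppF_subset N hs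
  have hφ : R.φ a ≠ 0 := h.2 a hsX ht
  obtain ⟨x, hx⟩ : ∃ x, R.φ a x ≠ 0 := by
    by_contra hc
    push_neg at hc
    exact hφ (LinearMap.ext fun x => hc x)
  have hmem : x ∈ N.L (Q.s a) := by rw [h.eq_top_of_mem_suppF N hs]; trivial
  have : R.φ a x ∈ N.L (Q.t a) := N.compat a x hmem
  refine mem_filter.mpr ⟨mem_univ _, fun hb => hx ?_⟩
  rw [hb] at this
  simpa using this

/-- The subrepresentation attached to a closed subset. -/
noncomputable def ThinOn.toSub (h : ThinOn R X) {T : Finset Q.V} (hT : FClosed Q X T) :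
    QSubRep R where
  L i := if i ∈ T then ⊤ else ⊥
  compat a x hx := by
    by_cases hs : Q.s a ∈ T
    · by_cases ht : Q.t a ∈ T
      · simp [ht]
      · by_cases htX : Q.t a ∈ X
        · exact absurd (hT.2 a hs htX) ht
        · have := h.subsingleton htX
          rw [if_neg ht]
          have hz : R.φ a x = 0 := Subsingleton.elim _ _
          simp [hz]
    · rw [if_neg hs] at hx
      have hz : x = 0 := by simpa using hx
      simp [hz]

lemma ThinOn.toSub_finrank (h : ThinOn R X) {T : Finset Q.V} (hT : FClosed Q X T) (i : Q.V) :
    finrank K ((h.toSub hT).L i) = if i ∈ T then 1 else 0 := by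
  by_cases hi : i ∈ T
  · have hiX : i ∈ X := hT.1 hi
    have h1 : finrank K (R.M i) = 1 := by simpa [hiX] using h.1 i
    rw [show (h.toSub hT).L i = ⊤ from if_pos hi,
      finrank_top K (R.M i), if_pos hi]
    exact h1
  · rw [show (h.toSub hT).L i = ⊥ from if_neg hi]; simp [hi]

end Thin

section Thin2

variable {K : Type} [Field K] {Q : FinQuiver} {R : QRep K Q} {X : Finset Q.V}

lemma stabInner_indicator (v : Q.V → ℝ) {d : Q.V → ℕ} {T : Finset Q.V}
    (hd : ∀ i, d i = if i ∈ T then 1 else 0) :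
    stabInner v d = ∑ i ∈ T, v i := by
  unfold stabInner
  rw [← Finset.sum_filter_add_sum_filter_not Finset.univ (fun i => i ∈ T)]
  have h1 : ∀ i ∈ Finset.univ.filter (fun i => i ∈ T), v i * (d i : ℝ) = v i := by
    intro i hi
    rw [hd i, if_pos (Finset.mem_filter.mp hi).2]; simp
  have h2 : ∀ i ∈ Finset.univ.filter (fun i => ¬(i ∈ T)), v i * (d i : ℝ) = 0 := by
    intro i hi
    rw [hd i, if_neg (Finset.mem_filter.mp hi).2]; simp
  rw [Finset.sum_congr rfl h1, Finset.sum_congr rfl h2, Finset.sum_const_zero, add_zero]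
  congr 1
  ext i; simp

/-- Characterization of semistability for a thin representation. -/
lemma ThinOn.isSemistable_iff (h : ThinOn R X) (v : Q.V → ℝ) :
    IsSemistable R v ↔ ((∑ i ∈ X, v i) = 0 ∧
      ∀ T : Finset Q.V, FClosed Q X T → (∑ i ∈ T, v i) ≤ 0) := by
  have hdim : stabInner v R.dimVec = ∑ i ∈ X, v i :=
    stabInner_indicator v (fun i => h.1 i)
  constructor
  · rintro ⟨h0, hsub⟩
    refine ⟨by rw [← hdim]; exact h0, fun T hT => ?_⟩
    have := hsub (h.toSub hT)
    rwa [stabInner_indicator v (h.toSub_finrank hT)] at this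
  · rintro ⟨h0, hsub⟩
    refine ⟨by rw [hdim]; exact h0, fun N => ?_⟩
    rw [stabInner_indicator v (h.finrank_suppF N)]
    exact hsub _ (h.suppF_closed N)

lemma ThinOn.nonzero_iff (h : ThinOn R X) : R.Nonzero ↔ X.Nonempty := by
  constructor
  · rintro ⟨i, hi⟩
    refine ⟨i, ?_⟩
    by_contra hx
    exact hi (by simpa [hx] using h.1 i)
  · rintro ⟨i, hi⟩
    exact ⟨i, by simp [h.1 i, hi]⟩

lemma ThinOn.toSub_ne_bot (h : ThinOn R X) {T : Finset Q.V} (hT : FClosed Q X T)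
    {i : Q.V} (hi : i ∈ T) : (h.toSub hT).L i ≠ ⊥ := by
  have hnt := h.nontrivial (hT.1 hi)
  simp only [ThinOn.toSub, if_pos hi]
  exact fun hc => (top_ne_bot : (⊤ : Submodule K (R.M i)) ≠ ⊥) hc

/-- Indecomposability from connectivity. -/
lemma ThinOn.indecomposable_of_connIn (h : ThinOn R X) (hc : ConnIn Q X) :
    Indecomposable R := by
  refine ⟨h.nonzero_iff.mpr hc.1, ?_⟩
  rintro ⟨U, W, ⟨iU, hiU⟩, ⟨iW, hiW⟩, hmeet, hjoin⟩
  -- supports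
  have hUt : iU ∈ U.suppF := Finset.mem_filter.mpr ⟨Finset.mem_univ _, hiU⟩
  have hWt : iW ∈ W.suppF := Finset.mem_filter.mpr ⟨Finset.mem_univ _, hiW⟩
  have hdisj : ∀ i, ¬(i ∈ U.suppF ∧ i ∈ W.suppF) := by
    rintro i ⟨h1, h2⟩
    have e1 := h.eq_top_of_mem_suppF U h1
    have e2 := h.eq_top_of_mem_suppF W h2
    have := hmeet i
    rw [e1, e2, top_inf_eq] at this
    have hnt := h.nontrivial (h.suppF_subset U h1)
    exact (top_ne_bot : (⊤ : Submodule K (R.M i)) ≠ ⊥) this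
  have hcover : ∀ i ∈ X, i ∈ U.suppF ∨ i ∈ W.suppF := by
    intro i hi
    by_contra hcontra
    push_neg at hcontra
    have e1 : U.L i = ⊥ := by
      by_contra hne; exact hcontra.1 (Finset.mem_filter.mpr ⟨Finset.mem_univ _, hne⟩)
    have e2 : W.L i = ⊥ := by
      by_contra hne; exact hcontra.2 (Finset.mem_filter.mpr ⟨Finset.mem_univ _, hne⟩)
    have := hjoin i
    rw [e1, e2, bot_sup_eq] at this
    have hnt := h.nontrivial hi
    exact (bot_ne_top : (⊥ : Submodule K (R.M i)) ≠ ⊤) this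
  -- path from iU to iW
  have hpath := hc.2 iU (h.suppF_subset U hUt) iW (h.suppF_subset W hWt)
  have hclU := h.suppF_closed U
  have hclW := h.suppF_closed W
  -- every vertex reachable from iU lies in U.suppF
  have key : ∀ j, Relation.ReflTransGen
      (fun x y => ∃ a, ((Q.s a = x ∧ Q.t a = y) ∨ (Q.s a = y ∧ Q.t a = x)) ∧
        Q.s a ∈ X ∧ Q.t a ∈ X) iU j → j ∈ U.suppF := by
    intro j hj
    induction hj with
    | refl => exact hUt
    | tail _ step ih =>
      rename_i b c _
      obtain ⟨a, hor, hsX, htX⟩ := step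
      rcases hor with ⟨hs, ht⟩ | ⟨hs, ht⟩
      · subst hs; subst ht
        exact hclU.2 a ih htX
      · -- arrow from c to b, b ∈ U.suppF; show c ∈ U.suppF
        subst hs; subst ht
        rcases hcover _ hsX with hcU | hcW
        · exact hcU
        · exact absurd (hclW.2 a hcW htX) (fun hh => hdisj _ ⟨ih, hh⟩)
  exact hdisj iW ⟨key iW hpath, hWt⟩

/-- Disconnection yields a decomposition. -/
lemma ThinOn.connIn_of_indecomposable (h : ThinOn R X) (hi : Indecomposable R) :
    ConnIn Q X := by
  have hne : X.Nonempty := h.nonzero_iff.mp hi.1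
  by_contra hcon
  apply hi.2
  unfold ConnIn at hcon
  push_neg at hcon
  obtain ⟨x, hx, y, hy, hxy⟩ := hcon hne
  set rel := fun p q => ∃ a, ((Q.s a = p ∧ Q.t a = q) ∨ (Q.s a = q ∧ Q.t a = p)) ∧
      Q.s a ∈ X ∧ Q.t a ∈ X with hrel
  set T : Finset Q.V := X.filter (fun j => Relation.ReflTransGen rel x j) with hTdef
  set T' : Finset Q.V := X \ T with hT'def
  have hxT : x ∈ T := Finset.mem_filter.mpr ⟨hx, Relation.ReflTransGen.refl⟩
  have hyT' : y ∈ T' := by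
    refine Finset.mem_sdiff.mpr ⟨hy, fun hc => hxy ?_⟩
    exact (Finset.mem_filter.mp hc).2
  have hTcl : FClosed Q X T := by
    refine ⟨Finset.filter_subset _ _, fun a hs ht => ?_⟩
    have hm := Finset.mem_filter.mp hs
    refine Finset.mem_filter.mpr ⟨ht, hm.2.tail ⟨a, Or.inl ⟨rfl, rfl⟩, hm.1, ht⟩⟩
  have hT'cl : FClosed Q X T' := by
    refine ⟨Finset.sdiff_subset, fun a hs ht => ?_⟩
    have hm := Finset.mem_sdiff.mp hs
    refine Finset.mem_sdiff.mpr ⟨ht, fun hc => hm.2 ?_⟩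
    have hrt := (Finset.mem_filter.mp hc).2
    exact Finset.mem_filter.mpr ⟨hm.1, hrt.tail ⟨a, Or.inr ⟨rfl, rfl⟩, hm.1, ht⟩⟩
  refine ⟨h.toSub hTcl, h.toSub hT'cl, ⟨x, h.toSub_ne_bot hTcl hxT⟩,
    ⟨y, h.toSub_ne_bot hT'cl hyT'⟩, fun i => ?_, fun i => ?_⟩
  · simp only [ThinOn.toSub]
    by_cases hiT : i ∈ T
    · have : i ∉ T' := fun hc => (Finset.mem_sdiff.mp hc).2 hiT
      simp [hiT, this]
    · simp [hiT]
  · simp only [ThinOn.toSub]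
    by_cases hiX : i ∈ X
    · by_cases hiT : i ∈ T
      · simp [hiT]
      · have : i ∈ T' := Finset.mem_sdiff.mpr ⟨hiX, hiT⟩
        simp [hiT, this]
    · have : i ∉ T := fun hc => hiX (hTcl.1 hc)
      have h2 : i ∉ T' := fun hc => hiX (hT'cl.1 hc)
      simp only [if_neg this, if_neg h2, sup_idem]
      have := h.subsingleton hiX
      exact Subsingleton.elim _ _

end Thin2

section Reps

variable {K : Type} [Field K] {Q : FinQuiver} {M : QRep K Q}

/-- Shorthand: closed subsets of the whole quiver. -/
abbrev QClosed (Q : FinQuiver) (T : Finset Q.V) : Prop := FClosed Q Finset.univ T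

lemma thinOn_univ (hthin : ∀ i, finrank K (M.M i) = 1) (hnz : ∀ a : Q.A, M.φ a ≠ 0) :
    ThinOn M Finset.univ :=
  ⟨fun i => by simp [hthin i], fun a _ _ => hnz a⟩

lemma thinOn_toRep (hM : ThinOn M Finset.univ) (L : QSubRep M) :
    ThinOn L.toRep L.suppF := by
  constructor
  · intro i
    have := hM.finrank_suppF L i
    exact this
  · intro a hs ht hzero
    have hsT : L.L (Q.s a) = ⊤ := hM.eq_top_of_mem_suppF L hs
    have hφ : M.φ a ≠ 0 := hM.2 a (Finset.mem_univ _) (Finset.mem_univ _)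
    obtain ⟨x, hx⟩ : ∃ x, M.φ a x ≠ 0 := by
      by_contra hc; push_neg at hc; exact hφ (LinearMap.ext fun x => hc x)
    have hmem : x ∈ L.L (Q.s a) := by rw [hsT]; trivial
    have := congrArg (fun f => (f ⟨x, hmem⟩ : ↥(L.L (Q.t a)))) hzero
    simp only [QSubRep.toRep, LinearMap.zero_apply] at this
    apply hx
    have : ((M.φ a).restrict (fun y hy => L.compat a y hy) ⟨x, hmem⟩ : M.M (Q.t a)) = 0 := by
      exact (congrArg Subtype.val this).trans rfl
    rwa [LinearMap.restrict_apply] at this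

lemma suppF_quot_bot (L : QSubRep M) {i : Q.V} (hi : i ∉ L.suppF) : L.L i = ⊥ := by
  by_contra hc
  exact hi (Finset.mem_filter.mpr ⟨Finset.mem_univ _, hc⟩)

lemma thinOn_quotBy (hM : ThinOn M Finset.univ) (L : QSubRep M) :
    ThinOn (M.quotBy L) L.suppFᶜ := by
  constructor
  · intro i
    have hq := Submodule.finrank_quotient_add_finrank (L.L i)
    have h1 : finrank K (M.M i) = 1 := by simpa using hM.1 i
    have hLr := hM.finrank_suppF L i
    show finrank K (M.M i ⧸ L.L i) = _
    by_cases hi : i ∈ L.suppF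
    · rw [if_neg (by simpa using hi)]
      rw [if_pos hi] at hLr
      omega
    · rw [if_pos (Finset.mem_compl.mpr hi)]
      rw [if_neg hi] at hLr
      omega
  · intro a hs ht hzero
    have hsb : L.L (Q.s a) = ⊥ := suppF_quot_bot L (by simpa using hs)
    have htb : L.L (Q.t a) = ⊥ := suppF_quot_bot L (by simpa using ht)
    have hφ : M.φ a ≠ 0 := hM.2 a (Finset.mem_univ _) (Finset.mem_univ _)
    obtain ⟨x, hx⟩ : ∃ x, M.φ a x ≠ 0 := by
      by_contra hc; push_neg at hc; exact hφ (LinearMap.ext fun x => hc x)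
    have heq := LinearMap.congr_fun hzero (Submodule.Quotient.mk x)
    replace heq : ((M.quotBy L).φ a) (Submodule.Quotient.mk x) = 0 := heq
    have heq2 : Submodule.Quotient.mk ((M.φ a) x) =
        (0 : M.M (Q.t a) ⧸ L.L (Q.t a)) := by
      exact (Submodule.mapQ_apply _ _ _ (h := fun y hy => L.compat a y hy) x).symm.trans heq
    rw [Submodule.Quotient.mk_eq_zero, htb, Submodule.mem_bot] at heq2
    exact hx heq2

lemma suppF_qclosed (hM : ThinOn M Finset.univ) (L : QSubRep M) :
    QClosed Q L.suppF := hM.suppF_closed L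

lemma fclosed_sub_iff (hM : ThinOn M Finset.univ) (L : QSubRep M) {T : Finset Q.V} :
    FClosed Q L.suppF T ↔ (T ⊆ L.suppF ∧ QClosed Q T) := by
  have hS := suppF_qclosed hM L
  constructor
  · rintro ⟨hsub, hcl⟩
    exact ⟨hsub, Finset.subset_univ T, fun a hs _ =>
      hcl a hs (hS.2 a (hsub hs) (Finset.mem_univ _))⟩
  · rintro ⟨hsub, hcl⟩
    exact ⟨hsub, fun a hs _ => hcl.2 a hs (Finset.mem_univ _)⟩

lemma fclosed_quot_iff (hM : ThinOn M Finset.univ) (L : QSubRep M) {U : Finset Q.V} :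
    FClosed Q L.suppFᶜ U ↔ (U ⊆ L.suppFᶜ ∧ QClosed Q (L.suppF ∪ U)) := by
  have hS := suppF_qclosed hM L
  constructor
  · rintro ⟨hsub, hcl⟩
    refine ⟨hsub, Finset.subset_univ _, fun a hs _ => ?_⟩
    rcases Finset.mem_union.mp hs with h1 | h2
    · exact Finset.mem_union.mpr (Or.inl (hS.2 a h1 (Finset.mem_univ _)))
    · by_cases ht : Q.t a ∈ L.suppF
      · exact Finset.mem_union.mpr (Or.inl ht)
      · exact Finset.mem_union.mpr (Or.inr (hcl a h2 (Finset.mem_compl.mpr ht)))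
  · rintro ⟨hsub, hcl⟩
    refine ⟨hsub, fun a hs ht => ?_⟩
    have := hcl.2 a (Finset.mem_union.mpr (Or.inr hs)) (Finset.mem_univ _)
    rcases Finset.mem_union.mp this with h1 | h2
    · exact absurd h1 (Finset.mem_compl.mp ht)
    · exact h2

/-- The key characterization: `v` makes both `L` and `M/L` semistable iff `v ∈ D(M)`
and the sum of `v` over the support of `L` vanishes. -/
lemma pair_semistable_iff (hM : ThinOn M Finset.univ) (L : QSubRep M) (v : Q.V → ℝ) :
    (IsSemistable L.toRep v ∧ IsSemistable (M.quotBy L) v) ↔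
      (IsSemistable M v ∧ (∑ i ∈ L.suppF, v i) = 0) := by
  rw [(thinOn_toRep hM L).isSemistable_iff, (thinOn_quotBy hM L).isSemistable_iff,
    hM.isSemistable_iff]
  have hsplit : (∑ i ∈ L.suppF, v i) + (∑ i ∈ L.suppFᶜ, v i) = ∑ i, v i :=
    Finset.sum_add_sum_compl _ _
  constructor
  · rintro ⟨⟨hS0, hSsub⟩, ⟨hC0, hCsub⟩⟩
    refine ⟨⟨by rw [← hsplit, hS0, hC0]; ring, fun T hT => ?_⟩, hS0⟩
    have hTsplit : (∑ i ∈ T ∩ L.suppF, v i) + (∑ i ∈ T \ L.suppF, v i) = ∑ i ∈ T, v i :=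
      Finset.sum_inter_add_sum_sdiff T L.suppF v
    have h1 : FClosed Q L.suppF (T ∩ L.suppF) := by
      refine ⟨Finset.inter_subset_right, fun a hs ht => ?_⟩
      have := Finset.mem_inter.mp hs
      exact Finset.mem_inter.mpr ⟨hT.2 a this.1 (Finset.mem_univ _), ht⟩
    have h2 : FClosed Q L.suppFᶜ (T \ L.suppF) := by
      refine ⟨fun i hi => Finset.mem_compl.mpr (Finset.mem_sdiff.mp hi).2, fun a hs ht => ?_⟩
      have := Finset.mem_sdiff.mp hs
      exact Finset.mem_sdiff.mpr ⟨hT.2 a this.1 (Finset.mem_univ _), Finset.mem_compl.mp ht⟩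
    have := add_nonpos (hSsub _ h1) (hCsub _ h2)
    linarith [hTsplit]
  · rintro ⟨⟨h0, hsub⟩, hS0⟩
    have hC0 : (∑ i ∈ L.suppFᶜ, v i) = 0 := by linarith
    refine ⟨⟨hS0, fun T hT => ?_⟩, ⟨hC0, fun U hU => ?_⟩⟩
    · exact hsub T ((fclosed_sub_iff hM L).mp hT).2
    · obtain ⟨hUsub, hUcl⟩ := (fclosed_quot_iff hM L).mp hU
      have hdisj : Disjoint L.suppF U := by
        rw [Finset.disjoint_right]
        intro i hi
        exact Finset.mem_compl.mp (hUsub hi)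
      have := hsub _ hUcl
      rw [Finset.sum_union hdisj] at this
      linarith

end Reps

section LinAlg

open Module

variable {V : Type} [Fintype V] [DecidableEq V]

/-- The linear functional `v ↦ ∑_{i ∈ T} v i`. -/
noncomputable def fSumL (T : Finset V) : (V → ℝ) →ₗ[ℝ] ℝ where
  toFun v := ∑ i ∈ T, v i
  map_add' x y := by simp [Finset.sum_add_distrib]
  map_smul' c x := by simp [Finset.mul_sum]

@[simp] lemma fSumL_apply (T : Finset V) (v : V → ℝ) : fSumL T v = ∑ i ∈ T, v i := rfl

/-- Several sum functionals bundled into one linear map. -/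
noncomputable def fMulti {k : ℕ} (m : Fin k → Finset V) : (V → ℝ) →ₗ[ℝ] (Fin k → ℝ) :=
  LinearMap.pi (fun j => fSumL (m j))

@[simp] lemma fMulti_apply {k : ℕ} (m : Fin k → Finset V) (v : V → ℝ) (j : Fin k) :
    fMulti m v j = ∑ i ∈ m j, v i := rfl

lemma sum_single {T : Finset V} (i : V) :
    (∑ j ∈ T, (Pi.single i (1:ℝ) : V → ℝ) j) = if i ∈ T then 1 else 0 := by
  have h : ∀ j ∈ T, (Pi.single i (1:ℝ) : V → ℝ) j = if j = i then (1:ℝ) else (0:ℝ) := by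
    intro j _
    simp [Pi.single_apply]
  rw [Finset.sum_congr rfl h, Finset.sum_ite_eq' T i (fun _ => (1:ℝ))]

lemma fMulti_ker_finrank {k : ℕ} {m : Fin k → Finset V}
    (hne : ∀ j, (m j).Nonempty) (hdisj : ∀ j l, j ≠ l → Disjoint (m j) (m l)) :
    finrank ℝ (LinearMap.ker (fMulti m)) + k = Fintype.card V := by
  have hs : ∀ j, ∃ x, fMulti m x = (Pi.single j 1 : Fin k → ℝ) := by
    intro j
    obtain ⟨i, hi⟩ := hne j
    refine ⟨Pi.single i 1, ?_⟩
    funext l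
    rw [fMulti_apply, sum_single, Pi.single_apply]
    by_cases hjl : l = j
    · subst hjl; rw [if_pos hi, if_pos rfl]
    · rw [if_neg hjl, if_neg (fun hmem =>
        absurd hmem (Finset.disjoint_left.mp (hdisj j l (fun e => hjl e.symm)) hi))]
  have hr : LinearMap.range (fMulti m) = ⊤ := by
    rw [← top_le_iff, ← (Pi.basisFun ℝ (Fin k)).span_eq, Submodule.span_le]
    rintro y ⟨j, rfl⟩
    obtain ⟨x, hx⟩ := hs j
    refine ⟨x, ?_⟩
    rw [hx, Pi.basisFun_apply]
  have h1 := LinearMap.finrank_range_add_finrank_ker (fMulti m)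
  rw [hr, finrank_top, Module.finrank_fintype_fun_eq_card,
    Module.finrank_fintype_fun_eq_card, Fintype.card_fin] at h1
  omega

lemma span_eq_ker_of_interior {P : Set (V → ℝ)} {k : ℕ} (f : (V → ℝ) →ₗ[ℝ] (Fin k → ℝ))
    (hPk : ∀ v ∈ P, f v = 0) {v₀ : V → ℝ} (hv₀ : v₀ ∈ P)
    (hint : ∀ u, f u = 0 → ∃ ε : ℝ, 0 < ε ∧ v₀ + ε • u ∈ P) :
    Submodule.span ℝ P = LinearMap.ker f := by
  apply le_antisymm
  · rw [Submodule.span_le]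
    intro v hv
    exact LinearMap.mem_ker.mpr (hPk v hv)
  · intro u hu
    obtain ⟨ε, hε, hmem⟩ := hint u (LinearMap.mem_ker.mp hu)
    have h1 : v₀ + ε • u ∈ Submodule.span ℝ P := Submodule.subset_span hmem
    have h2 : v₀ ∈ Submodule.span ℝ P := Submodule.subset_span hv₀
    have h3 : ε • u ∈ Submodule.span ℝ P := by
      have := Submodule.sub_mem _ h1 h2
      simpa using this
    have h4 := Submodule.smul_mem _ ε⁻¹ h3
    rwa [smul_smul, inv_mul_cancel₀ (ne_of_gt hε), one_smul] at h4

end LinAlg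

section Cone

open Finset Module

variable {Q : FinQuiver}

/-- The combinatorial model of the stability cone. -/
def coneQ (Q : FinQuiver) : Set (Q.V → ℝ) :=
  {v | (∑ i, v i) = 0 ∧ ∀ T : Finset Q.V, QClosed Q T → (∑ i ∈ T, v i) ≤ 0}

lemma stabSpace_eq_coneQ {K : Type} [Field K] {M : QRep K Q} (hM : ThinOn M Finset.univ) :
    stabSpace M = coneQ Q := by
  ext v
  rw [stabSpace, Set.mem_setOf_eq, hM.isSemistable_iff]
  exact Iff.rfl

lemma coneQ_zero : (0 : Q.V → ℝ) ∈ coneQ Q := by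
  constructor <;> simp

lemma coneQ_add {u v : Q.V → ℝ} (hu : u ∈ coneQ Q) (hv : v ∈ coneQ Q) :
    u + v ∈ coneQ Q := by
  refine ⟨?_, fun T hT => ?_⟩
  · have : (∑ i, (u + v) i) = (∑ i, u i) + ∑ i, v i := by
      simp [Finset.sum_add_distrib]
    rw [this, hu.1, hv.1, add_zero]
  · have : (∑ i ∈ T, (u + v) i) = (∑ i ∈ T, u i) + ∑ i ∈ T, v i := by
      simp [Finset.sum_add_distrib]
    rw [this]
    exact add_nonpos (hu.2 T hT) (hv.2 T hT)

lemma coneQ_smul {v : Q.V → ℝ} (hv : v ∈ coneQ Q) {c : ℝ} (hc : 0 ≤ c) :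
    c • v ∈ coneQ Q := by
  refine ⟨?_, fun T hT => ?_⟩
  · have : (∑ i, (c • v) i) = c * ∑ i, v i := by simp [Finset.mul_sum]
    rw [this, hv.1, mul_zero]
  · have : (∑ i ∈ T, (c • v) i) = c * ∑ i ∈ T, v i := by simp [Finset.mul_sum]
    rw [this]
    exact mul_nonpos_of_nonneg_of_nonpos hc (hv.2 T hT)

lemma connIn_univ (hconn : Q.Connected) : ConnIn Q (Finset.univ : Finset Q.V) := by
  have : Nonempty Q.V := hconn.1
  refine ⟨Finset.univ_nonempty, fun i _ j _ => ?_⟩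
  exact Relation.ReflTransGen.mono
    (by intro x y ⟨a, h⟩; exact ⟨a, h, Finset.mem_univ _, Finset.mem_univ _⟩) i j (hconn.2 i j)

/-- Crossing-arrow lemma: a proper nonempty closed subset of a connected induced subgraph
admits an arrow entering it from outside. -/
lemma crossingIn {X : Finset Q.V} (hc : ConnIn Q X) {T : Finset Q.V}
    (hT : FClosed Q X T) (hne : T.Nonempty) (hproper : T ≠ X) :
    ∃ a : Q.A, Q.s a ∈ X ∧ Q.t a ∈ X ∧ Q.s a ∉ T ∧ Q.t a ∈ T := by
  obtain ⟨j, hj⟩ := hne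
  obtain ⟨i, hiX, hiT⟩ : ∃ i, i ∈ X ∧ i ∉ T := by
    by_contra hcon
    push_neg at hcon
    exact hproper (Finset.Subset.antisymm hT.1 hcon)
  have key : ∀ j', Relation.ReflTransGen
      (fun x y => ∃ a, ((Q.s a = x ∧ Q.t a = y) ∨ (Q.s a = y ∧ Q.t a = x)) ∧
        Q.s a ∈ X ∧ Q.t a ∈ X) i j' → j' ∈ T →
      ∃ a : Q.A, Q.s a ∈ X ∧ Q.t a ∈ X ∧ Q.s a ∉ T ∧ Q.t a ∈ T := by
    intro j' hpath
    induction hpath with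
    | refl => intro h; exact absurd h hiT
    | @tail b c _ hbc ih =>
      intro hcT
      obtain ⟨a, hor, hsX, htX⟩ := hbc
      rcases hor with ⟨hs, ht⟩ | ⟨hs, ht⟩
      · by_cases hbT : b ∈ T
        · exact ih hbT
        · refine ⟨a, hsX, htX, ?_, ?_⟩
          · rw [hs]; exact hbT
          · rw [ht]; exact hcT
      · have hbT : b ∈ T := by
          have := hT.2 a (by rw [hs]; exact hcT) htX
          rwa [ht] at this
        exact ih hbT
  exact key j (hc.2 i hiX j (hT.1 hj)) hj

/-- The elementary generator attached to an arrow. -/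
def wgen (a : Q.A) : Q.V → ℝ :=
  fun i => (if i = Q.s a then 1 else 0) - (if i = Q.t a then 1 else 0)

lemma sum_wgen (a : Q.A) (T : Finset Q.V) :
    (∑ i ∈ T, wgen a i) =
      (if Q.s a ∈ T then (1:ℝ) else 0) - (if Q.t a ∈ T then (1:ℝ) else 0) := by
  unfold wgen
  rw [Finset.sum_sub_distrib, Finset.sum_ite_eq' T (Q.s a) (fun _ => (1:ℝ)),
    Finset.sum_ite_eq' T (Q.t a) (fun _ => (1:ℝ))]

/-- Generator specification relative to a closed set `S`. -/
def GSpec (S : Finset Q.V) (w : Q.V → ℝ) : Prop :=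
  (∀ T : Finset Q.V, QClosed Q T → (∑ i ∈ T, w i) ≤ 0) ∧
  (∀ T : Finset Q.V, FClosed Q S T → (∑ i ∈ T, w i) ≤ 0) ∧
  (∀ U : Finset Q.V, FClosed Q Sᶜ U → (∑ i ∈ U, w i) ≤ 0) ∧
  ((∑ i ∈ S, w i) = 0) ∧ ((∑ i, w i) = 0)

lemma gspec_zero (S : Finset Q.V) : GSpec S (0 : Q.V → ℝ) := by
  refine ⟨fun T _ => ?_, fun T _ => ?_, fun U _ => ?_, ?_, ?_⟩ <;> simp

lemma gspec_add {S : Finset Q.V} {w w' : Q.V → ℝ} (h : GSpec S w) (h' : GSpec S w') :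
    GSpec S (w + w') := by
  have hsum : ∀ T : Finset Q.V, (∑ i ∈ T, (w + w') i) = (∑ i ∈ T, w i) + ∑ i ∈ T, w' i :=
    fun T => by simp [Finset.sum_add_distrib]
  exact ⟨fun T hT => by rw [hsum]; exact add_nonpos (h.1 T hT) (h'.1 T hT),
    fun T hT => by rw [hsum]; exact add_nonpos (h.2.1 T hT) (h'.2.1 T hT),
    fun U hU => by rw [hsum]; exact add_nonpos (h.2.2.1 U hU) (h'.2.2.1 U hU),
    by rw [hsum]; rw [h.2.2.2.1, h'.2.2.2.1, add_zero],
    by rw [hsum]; rw [h.2.2.2.2, h'.2.2.2.2, add_zero]⟩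

lemma gspec_sum {S : Finset Q.V} {ι : Type} (s : Finset ι) (g : ι → (Q.V → ℝ))
    (h : ∀ x ∈ s, GSpec S (g x)) : GSpec S (∑ x ∈ s, g x) := by
  classical
  induction s using Finset.induction_on with
  | empty => simpa using gspec_zero S
  | insert _ _ hnotmem ih =>
    rename_i x s'
    rw [Finset.sum_insert hnotmem]
    exact gspec_add (h x (Finset.mem_insert_self x s'))
      (ih (fun y hy => h y (Finset.mem_insert_of_mem hy)))

lemma gspec_type1 {S : Finset Q.V} (hS : QClosed Q S) {a : Q.A}
    (hs : Q.s a ∈ S) (ht : Q.t a ∈ S) : GSpec S (wgen a) := by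
  refine ⟨fun T hT => ?_, fun T hT => ?_, fun U hU => ?_, ?_, ?_⟩
  · rw [sum_wgen]
    by_cases h1 : Q.s a ∈ T
    · rw [if_pos h1, if_pos (hT.2 a h1 (Finset.mem_univ _))]; norm_num
    · rw [if_neg h1]; split <;> norm_num
  · rw [sum_wgen]
    by_cases h1 : Q.s a ∈ T
    · rw [if_pos h1, if_pos (hT.2 a h1 ht)]; norm_num
    · rw [if_neg h1]; split <;> norm_num
  · rw [sum_wgen]
    have h1 : Q.s a ∉ U := fun hc => (Finset.mem_compl.mp (hU.1 hc)) hs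
    rw [if_neg h1]; split <;> norm_num
  · rw [sum_wgen, if_pos hs, if_pos ht]; ring
  · rw [sum_wgen, if_pos (Finset.mem_univ _), if_pos (Finset.mem_univ _)]; ring

lemma gspec_type2 {S : Finset Q.V} {a : Q.A}
    (hs : Q.s a ∉ S) (ht : Q.t a ∉ S) : GSpec S (wgen a) := by
  refine ⟨fun T hT => ?_, fun T hT => ?_, fun U hU => ?_, ?_, ?_⟩
  · rw [sum_wgen]
    by_cases h1 : Q.s a ∈ T
    · rw [if_pos h1, if_pos (hT.2 a h1 (Finset.mem_univ _))]; norm_num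
    · rw [if_neg h1]; split <;> norm_num
  · rw [sum_wgen]
    have h1 : Q.s a ∉ T := fun hc => hs (hT.1 hc)
    rw [if_neg h1]; split <;> norm_num
  · rw [sum_wgen]
    by_cases h1 : Q.s a ∈ U
    · rw [if_pos h1, if_pos (hU.2 a h1 (Finset.mem_compl.mpr ht))]; norm_num
    · rw [if_neg h1]; split <;> norm_num
  · rw [sum_wgen, if_neg hs, if_neg ht]; ring
  · rw [sum_wgen, if_pos (Finset.mem_univ _), if_pos (Finset.mem_univ _)]; ring

end Cone

section Cone2

open Finset Module

variable {Q : FinQuiver}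

/-- Interior point of the cone `coneQ`. -/
lemma exists_interior_coneQ (hconn : Q.Connected) :
    ∃ v₀ ∈ coneQ Q, ∀ T : Finset Q.V, QClosed Q T → T.Nonempty → T ≠ Finset.univ →
      (∑ i ∈ T, v₀ i) ≤ -1 := by
  have hcu := connIn_univ hconn
  set g : Finset Q.V → (Q.V → ℝ) := fun T =>
    if h : ∃ a : Q.A, Q.s a ∉ T ∧ Q.t a ∈ T then wgen h.choose else 0 with hgdef
  have hg0 : ∀ T' T : Finset Q.V, QClosed Q T → (∑ i ∈ T, g T' i) ≤ 0 := by
    intro T' T hT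
    rw [hgdef]
    by_cases h : ∃ a : Q.A, Q.s a ∉ T' ∧ Q.t a ∈ T'
    · simp only [dif_pos h]
      rw [sum_wgen]
      by_cases h1 : Q.s h.choose ∈ T
      · rw [if_pos h1, if_pos (hT.2 _ h1 (Finset.mem_univ _))]; norm_num
      · rw [if_neg h1]; split <;> norm_num
    · simp only [dif_neg h]; simp
  have hgu : ∀ T' : Finset Q.V, (∑ i, g T' i) = 0 := by
    intro T'
    rw [hgdef]
    by_cases h : ∃ a : Q.A, Q.s a ∉ T' ∧ Q.t a ∈ T'
    · simp only [dif_pos h]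
      rw [sum_wgen, if_pos (Finset.mem_univ _), if_pos (Finset.mem_univ _)]; ring
    · simp only [dif_neg h]; simp
  have hgstrict : ∀ T : Finset Q.V, QClosed Q T → T.Nonempty → T ≠ Finset.univ →
      (∑ i ∈ T, g T i) = -1 := by
    intro T hT hne hproper
    have hex : ∃ a : Q.A, Q.s a ∉ T ∧ Q.t a ∈ T := by
      obtain ⟨a, _, _, h3, h4⟩ := crossingIn hcu hT hne hproper
      exact ⟨a, h3, h4⟩
    rw [hgdef]
    simp only [dif_pos hex]
    rw [sum_wgen, if_neg hex.choose_spec.1, if_pos hex.choose_spec.2]; ring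
  set 𝒩 : Finset (Finset Q.V) := Finset.univ.filter
    (fun T => QClosed Q T ∧ T.Nonempty ∧ T ≠ Finset.univ) with h𝒩
  refine ⟨fun i => ∑ T ∈ 𝒩, g T i, ⟨?_, fun T hT => ?_⟩, fun T hT hne hproper => ?_⟩
  · rw [Finset.sum_comm]
    exact Finset.sum_eq_zero (fun T _ => hgu T)
  · rw [Finset.sum_comm]
    exact Finset.sum_nonpos (fun T' _ => hg0 T' T hT)
  · rw [Finset.sum_comm]
    have hTm : T ∈ 𝒩 := by
      rw [h𝒩]; exact Finset.mem_filter.mpr ⟨Finset.mem_univ _, hT, hne, hproper⟩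
    calc (∑ T' ∈ 𝒩, ∑ i ∈ T, g T' i)
        ≤ ∑ T' ∈ 𝒩, (if T' = T then (-1 : ℝ) else 0) := by
          refine Finset.sum_le_sum (fun T' _ => ?_)
          by_cases hTT : T' = T
          · rw [if_pos hTT, hTT]
            exact le_of_eq (hgstrict T hT hne hproper)
          · rw [if_neg hTT]
            exact hg0 T' T hT
      _ = -1 := by rw [Finset.sum_ite_eq' 𝒩 T (fun _ => (-1:ℝ)), if_pos hTm]

/-- The span of `coneQ` is the full hyperplane. -/
lemma span_coneQ (hconn : Q.Connected) :
    finrank ℝ (Submodule.span ℝ (coneQ Q)) + 1 = Fintype.card Q.V := by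
  obtain ⟨v₀, hv₀, hstrict⟩ := exists_interior_coneQ hconn
  set f := fMulti (fun _ : Fin 1 => (Finset.univ : Finset Q.V)) with hf
  have hPk : ∀ v ∈ coneQ Q, f v = 0 := by
    intro v hv
    funext j
    rw [hf, fMulti_apply]
    exact hv.1
  have hspan : Submodule.span ℝ (coneQ Q) = LinearMap.ker f := by
    refine span_eq_ker_of_interior f hPk hv₀ (fun u hu => ?_)
    have hu0 : (∑ i, u i) = 0 := by
      have := congrFun hu 0
      rwa [hf, fMulti_apply] at this
    set B : ℝ := ∑ T ∈ (Finset.univ : Finset (Finset Q.V)), |∑ i ∈ T, u i| with hB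
    have hBnn : 0 ≤ B := Finset.sum_nonneg (fun T _ => abs_nonneg _)
    have hBle : ∀ T : Finset Q.V, |∑ i ∈ T, u i| ≤ B := by
      intro T
      rw [hB]
      exact Finset.single_le_sum (f := fun T' : Finset Q.V => |∑ i ∈ T', u i|)
        (fun T' _ => abs_nonneg _) (Finset.mem_univ T)
    set ε : ℝ := (1 + B)⁻¹ with hε
    have hεpos : 0 < ε := by rw [hε]; positivity
    have hεB : ε * B < 1 := by
      rw [hε]
      rw [inv_mul_lt_iff₀ (by linarith)]
      linarith
    refine ⟨ε, hεpos, ?_, fun T hT => ?_⟩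
    · have : (∑ i, (v₀ + ε • u) i) = (∑ i, v₀ i) + ε * ∑ i, u i := by
        simp [Finset.sum_add_distrib, Finset.mul_sum]
      rw [this, hv₀.1, hu0]; ring
    · have hsum : (∑ i ∈ T, (v₀ + ε • u) i) = (∑ i ∈ T, v₀ i) + ε * ∑ i ∈ T, u i := by
        simp [Finset.sum_add_distrib, Finset.mul_sum]
      rw [hsum]
      by_cases hne : T.Nonempty
      · by_cases hTu : T = Finset.univ
        · subst hTu
          rw [hv₀.1, hu0]; norm_num
        · have h1 := hstrict T hT hne hTu
          have h2 : ε * (∑ i ∈ T, u i) ≤ ε * |∑ i ∈ T, u i| :=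
            mul_le_mul_of_nonneg_left (le_abs_self _) (le_of_lt hεpos)
          have h3 : ε * |∑ i ∈ T, u i| ≤ ε * B :=
            mul_le_mul_of_nonneg_left (hBle T) (le_of_lt hεpos)
          linarith
      · rw [Finset.not_nonempty_iff_eq_empty] at hne
        subst hne
        simp
  rw [hspan]
  have := fMulti_ker_finrank (m := fun _ : Fin 1 => (Finset.univ : Finset Q.V))
    (fun _ => (by have : Nonempty Q.V := hconn.1; exact Finset.univ_nonempty))
    (fun j l hjl => absurd (Subsingleton.elim j l) hjl)
  simpa using this

end Cone2

section Cone3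

open Finset Module

variable {Q : FinQuiver}

/-- The candidate facet attached to a closed set `S`. -/
def FSset (Q : FinQuiver) (S : Finset Q.V) : Set (Q.V → ℝ) :=
  coneQ Q ∩ {v | (∑ i ∈ S, v i) = 0}

lemma inter_fclosed {S T : Finset Q.V} (hS : QClosed Q S) (hT : QClosed Q T) :
    FClosed Q S (T ∩ S) := by
  refine ⟨Finset.inter_subset_right, fun a hs ht => ?_⟩
  exact Finset.mem_inter.mpr ⟨hT.2 a (Finset.mem_inter.mp hs).1 (Finset.mem_univ _), ht⟩

lemma diff_fclosed {S T : Finset Q.V} (hT : QClosed Q T) :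
    FClosed Q Sᶜ (T \ S) := by
  refine ⟨fun i hi => Finset.mem_compl.mpr (Finset.mem_sdiff.mp hi).2, fun a hs ht => ?_⟩
  exact Finset.mem_sdiff.mpr ⟨hT.2 a (Finset.mem_sdiff.mp hs).1 (Finset.mem_univ _),
    Finset.mem_compl.mp ht⟩

lemma qclosed_of_fclosed_sub {S T : Finset Q.V} (hS : QClosed Q S) (hT : FClosed Q S T) :
    QClosed Q T :=
  ⟨Finset.subset_univ T, fun a hs _ => hT.2 a hs (hS.2 a (hT.1 hs) (Finset.mem_univ _))⟩

lemma qclosed_union_of_fclosed_compl {S U : Finset Q.V} (hS : QClosed Q S)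
    (hU : FClosed Q Sᶜ U) : QClosed Q (S ∪ U) := by
  refine ⟨Finset.subset_univ _, fun a hs _ => ?_⟩
  rcases Finset.mem_union.mp hs with h1 | h2
  · exact Finset.mem_union.mpr (Or.inl (hS.2 a h1 (Finset.mem_univ _)))
  · by_cases ht : Q.t a ∈ S
    · exact Finset.mem_union.mpr (Or.inl ht)
    · exact Finset.mem_union.mpr (Or.inr (hU.2 a h2 (Finset.mem_compl.mpr ht)))

/-- Relative interior point of `FSset`. -/
lemma exists_interior_FSset {S : Finset Q.V} (hS : QClosed Q S)
    (hcS : ConnIn Q S) (hcSc : ConnIn Q Sᶜ) :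
    ∃ v₀ ∈ FSset Q S,
      (∀ T : Finset Q.V, FClosed Q S T → T.Nonempty → T ≠ S → (∑ i ∈ T, v₀ i) ≤ -1) ∧
      (∀ U : Finset Q.V, FClosed Q Sᶜ U → U.Nonempty → U ≠ Sᶜ → (∑ i ∈ U, v₀ i) ≤ -1) ∧
      GSpec S v₀ := by
  set g1 : Finset Q.V → (Q.V → ℝ) := fun T =>
    if h : ∃ a : Q.A, Q.s a ∈ S ∧ Q.t a ∈ S ∧ Q.s a ∉ T ∧ Q.t a ∈ T
    then wgen h.choose else 0 with hg1
  set g2 : Finset Q.V → (Q.V → ℝ) := fun U =>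
    if h : ∃ a : Q.A, Q.s a ∉ S ∧ Q.t a ∉ S ∧ Q.s a ∉ U ∧ Q.t a ∈ U
    then wgen h.choose else 0 with hg2
  have hg1spec : ∀ T, GSpec S (g1 T) := by
    intro T
    rw [hg1]
    by_cases h : ∃ a : Q.A, Q.s a ∈ S ∧ Q.t a ∈ S ∧ Q.s a ∉ T ∧ Q.t a ∈ T
    · simp only [dif_pos h]
      exact gspec_type1 hS h.choose_spec.1 h.choose_spec.2.1
    · simp only [dif_neg h]
      exact gspec_zero S
  have hg2spec : ∀ U, GSpec S (g2 U) := by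
    intro U
    rw [hg2]
    by_cases h : ∃ a : Q.A, Q.s a ∉ S ∧ Q.t a ∉ S ∧ Q.s a ∉ U ∧ Q.t a ∈ U
    · simp only [dif_pos h]
      exact gspec_type2 h.choose_spec.1 h.choose_spec.2.1
    · simp only [dif_neg h]
      exact gspec_zero S
  have hg1strict : ∀ T, FClosed Q S T → T.Nonempty → T ≠ S → (∑ i ∈ T, g1 T i) = -1 := by
    intro T hT hne hproper
    have hex : ∃ a : Q.A, Q.s a ∈ S ∧ Q.t a ∈ S ∧ Q.s a ∉ T ∧ Q.t a ∈ T := by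
      obtain ⟨a, h1, h2, h3, h4⟩ := crossingIn hcS hT hne hproper
      exact ⟨a, h1, h2, h3, h4⟩
    rw [hg1]
    simp only [dif_pos hex]
    rw [sum_wgen, if_neg hex.choose_spec.2.2.1, if_pos hex.choose_spec.2.2.2]; ring
  have hg2strict : ∀ U, FClosed Q Sᶜ U → U.Nonempty → U ≠ Sᶜ → (∑ i ∈ U, g2 U i) = -1 := by
    intro U hU hne hproper
    have hex : ∃ a : Q.A, Q.s a ∉ S ∧ Q.t a ∉ S ∧ Q.s a ∉ U ∧ Q.t a ∈ U := by
      obtain ⟨a, h1, h2, h3, h4⟩ := crossingIn hcSc hU hne hproper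
      exact ⟨a, Finset.mem_compl.mp h1, Finset.mem_compl.mp h2, h3, h4⟩
    rw [hg2]
    simp only [dif_pos hex]
    rw [sum_wgen, if_neg hex.choose_spec.2.2.1, if_pos hex.choose_spec.2.2.2]; ring
  set 𝒯 : Finset (Finset Q.V) := Finset.univ.filter
    (fun T => FClosed Q S T ∧ T.Nonempty ∧ T ≠ S) with h𝒯
  set 𝒰 : Finset (Finset Q.V) := Finset.univ.filter
    (fun U => FClosed Q Sᶜ U ∧ U.Nonempty ∧ U ≠ Sᶜ) with h𝒰
  set v₀ : Q.V → ℝ := (∑ T ∈ 𝒯, g1 T) + ∑ U ∈ 𝒰, g2 U with hv₀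
  have hspec : GSpec S v₀ := by
    rw [hv₀]
    exact gspec_add (gspec_sum 𝒯 g1 (fun T _ => hg1spec T))
      (gspec_sum 𝒰 g2 (fun U _ => hg2spec U))
  have hv₀sum : ∀ W : Finset Q.V,
      (∑ i ∈ W, v₀ i) = (∑ T ∈ 𝒯, ∑ i ∈ W, g1 T i) + ∑ U ∈ 𝒰, ∑ i ∈ W, g2 U i := by
    intro W
    rw [hv₀]
    have : ∀ i, ((∑ T ∈ 𝒯, g1 T) + ∑ U ∈ 𝒰, g2 U) i
        = (∑ T ∈ 𝒯, g1 T i) + ∑ U ∈ 𝒰, g2 U i := by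
      intro i; simp [Finset.sum_apply]
    rw [Finset.sum_congr rfl (fun i _ => this i), Finset.sum_add_distrib,
      Finset.sum_comm, Finset.sum_comm (s := W)]
  refine ⟨v₀, ⟨⟨hspec.2.2.2.2, fun T hT => hspec.1 T hT⟩, hspec.2.2.2.1⟩,
    fun T hT hne hproper => ?_, fun U hU hne hproper => ?_, hspec⟩
  · rw [hv₀sum]
    have hTm : T ∈ 𝒯 := by
      rw [h𝒯]; exact Finset.mem_filter.mpr ⟨Finset.mem_univ _, hT, hne, hproper⟩
    have hpart1 : (∑ T' ∈ 𝒯, ∑ i ∈ T, g1 T' i) ≤ -1 := by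
      calc (∑ T' ∈ 𝒯, ∑ i ∈ T, g1 T' i)
          ≤ ∑ T' ∈ 𝒯, (if T' = T then (-1 : ℝ) else 0) := by
            refine Finset.sum_le_sum (fun T' _ => ?_)
            by_cases hTT : T' = T
            · rw [if_pos hTT, hTT]
              exact le_of_eq (hg1strict T hT hne hproper)
            · rw [if_neg hTT]
              exact (hg1spec T').2.1 T hT
        _ = -1 := by rw [Finset.sum_ite_eq' 𝒯 T (fun _ => (-1:ℝ)), if_pos hTm]
    have hpart2 : (∑ U ∈ 𝒰, ∑ i ∈ T, g2 U i) ≤ 0 :=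
      Finset.sum_nonpos (fun U _ => (hg2spec U).2.1 T hT)
    linarith
  · rw [hv₀sum]
    have hUm : U ∈ 𝒰 := by
      rw [h𝒰]; exact Finset.mem_filter.mpr ⟨Finset.mem_univ _, hU, hne, hproper⟩
    have hpart1 : (∑ T' ∈ 𝒯, ∑ i ∈ U, g1 T' i) ≤ 0 :=
      Finset.sum_nonpos (fun T' _ => (hg1spec T').2.2.1 U hU)
    have hpart2 : (∑ U' ∈ 𝒰, ∑ i ∈ U, g2 U' i) ≤ -1 := by
      calc (∑ U' ∈ 𝒰, ∑ i ∈ U, g2 U' i)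
          ≤ ∑ U' ∈ 𝒰, (if U' = U then (-1 : ℝ) else 0) := by
            refine Finset.sum_le_sum (fun U' _ => ?_)
            by_cases hUU : U' = U
            · rw [if_pos hUU, hUU]
              exact le_of_eq (hg2strict U hU hne hproper)
            · rw [if_neg hUU]
              exact (hg2spec U').2.2.1 U hU
        _ = -1 := by rw [Finset.sum_ite_eq' 𝒰 U (fun _ => (-1:ℝ)), if_pos hUm]
    linarith

end Cone3

section Cone4

open Finset Module

variable {Q : FinQuiver}

/-- The pair of functionals cutting out the span of `FSset`. -/
noncomputable def fPair (S : Finset Q.V) : (Q.V → ℝ) →ₗ[ℝ] (Fin 2 → ℝ) :=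
  fMulti (fun j => if j = 0 then S else Sᶜ)

lemma fPair_zero_iff (S : Finset Q.V) (v : Q.V → ℝ) :
    fPair S v = 0 ↔ ((∑ i ∈ S, v i) = 0 ∧ (∑ i ∈ Sᶜ, v i) = 0) := by
  constructor
  · intro h
    constructor
    · have := congrFun h 0
      simpa [fPair, fMulti_apply] using this
    · have := congrFun h 1
      simpa [fPair, fMulti_apply] using this
  · rintro ⟨h0, h1⟩
    funext j
    by_cases hj : j = 0
    · subst hj; simpa [fPair, fMulti_apply] using h0
    · have : j = 1 := by omega
      subst this; simpa [fPair, fMulti_apply] using h1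

lemma FSset_subset_ker {S : Finset Q.V} {v : Q.V → ℝ} (hv : v ∈ FSset Q S) :
    fPair S v = 0 := by
  rw [fPair_zero_iff]
  have h2 : (∑ i ∈ S, v i) = 0 := hv.2
  refine ⟨h2, ?_⟩
  have := Finset.sum_add_sum_compl S v
  have h1 := hv.1.1
  linarith

lemma finrank_ker_fPair {S : Finset Q.V} (hSne : S.Nonempty) (hSproper : S ≠ Finset.univ) :
    finrank ℝ (LinearMap.ker (fPair S)) + 2 = Fintype.card Q.V := by
  have hScne : Sᶜ.Nonempty := by
    rw [Finset.nonempty_iff_ne_empty]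
    intro hc
    exact hSproper (by simpa using congrArg compl hc)
  have := fMulti_ker_finrank (m := fun j : Fin 2 => if j = 0 then S else Sᶜ)
    (fun j => by by_cases hj : j = 0 <;> simp [hj, hSne, hScne])
    (fun j l hjl => by
      by_cases hj : j = 0
      · have hl : l ≠ 0 := fun hc => hjl (by rw [hj, hc])
        simp only [if_pos hj, if_neg hl]
        exact disjoint_compl_right
      · have hl : l = 0 := by omega
        simp only [if_neg hj, if_pos hl]
        exact disjoint_compl_left)
  exact this

/-- The span of a good `FSset` is the codimension-2 subspace. -/
lemma span_FSset {S : Finset Q.V} (hS : QClosed Q S) (hSne : S.Nonempty)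
    (hSproper : S ≠ Finset.univ) (hcS : ConnIn Q S) (hcSc : ConnIn Q Sᶜ) :
    Submodule.span ℝ (FSset Q S) = LinearMap.ker (fPair S) := by
  obtain ⟨v₀, hv₀, hstr1, hstr2, hspec⟩ := exists_interior_FSset hS hcS hcSc
  refine span_eq_ker_of_interior (fPair S) (fun v hv => FSset_subset_ker hv) hv₀
    (fun u hu => ?_)
  rw [fPair_zero_iff] at hu
  obtain ⟨huS, huSc⟩ := hu
  have hu0 : (∑ i, u i) = 0 := by
    have := Finset.sum_add_sum_compl S u
    linarith
  set B : ℝ := ∑ T ∈ (Finset.univ : Finset (Finset Q.V)), |∑ i ∈ T, u i| with hB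
  have hBnn : 0 ≤ B := Finset.sum_nonneg (fun T _ => abs_nonneg _)
  have hBle : ∀ T : Finset Q.V, |∑ i ∈ T, u i| ≤ B := by
    intro T
    rw [hB]
    exact Finset.single_le_sum (f := fun T' : Finset Q.V => |∑ i ∈ T', u i|)
      (fun T' _ => abs_nonneg _) (Finset.mem_univ T)
  set ε : ℝ := (1 + B)⁻¹ with hε
  have hεpos : 0 < ε := by rw [hε]; positivity
  have hεB : ε * B < 1 := by
    rw [hε, inv_mul_lt_iff₀ (by linarith)]
    linarith
  have hsum : ∀ W : Finset Q.V,
      (∑ i ∈ W, (v₀ + ε • u) i) = (∑ i ∈ W, v₀ i) + ε * ∑ i ∈ W, u i := by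
    intro W; simp [Finset.sum_add_distrib, Finset.mul_sum]
  -- bound on a part contained in `Y` (Y = S or Sᶜ)
  have hperpart : ∀ (Y P : Finset Q.V), (∑ i ∈ Y, v₀ i) = 0 → (∑ i ∈ Y, u i) = 0 →
      (∀ hP : P.Nonempty, P ≠ Y → (∑ i ∈ P, v₀ i) ≤ -1) → P ⊆ Y →
      (∑ i ∈ P, (v₀ + ε • u) i) ≤ 0 := by
    intro Y P hY0 hYu hPstrict hPY
    rw [hsum]
    by_cases hPne : P.Nonempty
    · by_cases hPY' : P = Y
      · subst hPY'
        rw [hY0, hYu]; norm_num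
      · have h1 := hPstrict hPne hPY'
        have h2 : ε * (∑ i ∈ P, u i) ≤ ε * |∑ i ∈ P, u i| :=
          mul_le_mul_of_nonneg_left (le_abs_self _) (le_of_lt hεpos)
        have h3 : ε * |∑ i ∈ P, u i| ≤ ε * B :=
          mul_le_mul_of_nonneg_left (hBle P) (le_of_lt hεpos)
        linarith
    · rw [Finset.not_nonempty_iff_eq_empty] at hPne
      subst hPne; simp
  have hScu : (∑ i ∈ Sᶜ, v₀ i) = 0 := by
    have h1 := Finset.sum_add_sum_compl S v₀
    have h2 := hspec.2.2.2.1
    have h3 := hspec.2.2.2.2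
    linarith
  refine ⟨ε, hεpos, ⟨?_, fun T hT => ?_⟩, ?_⟩
  · have : (∑ i, (v₀ + ε • u) i) = (∑ i, v₀ i) + ε * ∑ i, u i := hsum Finset.univ
    rw [this, hspec.2.2.2.2, hu0]; ring
  · have hTsplit : (∑ i ∈ T ∩ S, (v₀ + ε • u) i) + (∑ i ∈ T \ S, (v₀ + ε • u) i)
        = ∑ i ∈ T, (v₀ + ε • u) i := Finset.sum_inter_add_sum_sdiff T S _
    have hp1 : (∑ i ∈ T ∩ S, (v₀ + ε • u) i) ≤ 0 := by
      refine hperpart S (T ∩ S) hspec.2.2.2.1 huS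
        (fun hne hproper => hstr1 _ (inter_fclosed hS hT) hne hproper)
        Finset.inter_subset_right
    have hp2 : (∑ i ∈ T \ S, (v₀ + ε • u) i) ≤ 0 := by
      refine hperpart Sᶜ (T \ S) hScu huSc
        (fun hne hproper => hstr2 _ (diff_fclosed hT) hne hproper)
        (fun i hi => Finset.mem_compl.mpr (Finset.mem_sdiff.mp hi).2)
    linarith
  · show (∑ i ∈ S, (v₀ + ε • u) i) = 0
    rw [hsum, hspec.2.2.2.1, huS]; ring

lemma finrank_span_FSset {S : Finset Q.V} (hS : QClosed Q S) (hSne : S.Nonempty)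
    (hSproper : S ≠ Finset.univ) (hcS : ConnIn Q S) (hcSc : ConnIn Q Sᶜ) :
    finrank ℝ (Submodule.span ℝ (FSset Q S)) + 2 = Fintype.card Q.V := by
  rw [span_FSset hS hSne hSproper hcS hcSc]
  exact finrank_ker_fPair hSne hSproper

end Cone4

section Facet1

open Finset Module

variable {Q : FinQuiver}

lemma rInner_sum_formula (a v : Q.V → ℝ) : rInner a v = ∑ i, a i * v i := rfl

lemma rInner_add (a u v : Q.V → ℝ) : rInner a (u + v) = rInner a u + rInner a v := by
  simp [rInner, mul_add, Finset.sum_add_distrib]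

lemma rInner_smul (a v : Q.V → ℝ) (c : ℝ) : rInner a (c • v) = c * rInner a v := by
  simp only [rInner, Pi.smul_apply, smul_eq_mul, Finset.mul_sum]
  exact Finset.sum_congr rfl (fun i _ => by ring)

lemma rInner_ind (S : Finset Q.V) (v : Q.V → ℝ) :
    rInner (fun i => if i ∈ S then (1:ℝ) else 0) v = ∑ i ∈ S, v i := by
  simp only [rInner, ite_mul, one_mul, zero_mul]
  rw [Finset.sum_ite_mem, Finset.univ_inter]

/-- `FSset` is a face of the cone. -/
lemma FSset_isFace {S : Finset Q.V} (hS : QClosed Q S) :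
    IsFace (coneQ Q) (FSset Q S) := by
  refine ⟨fun i => if i ∈ S then (1:ℝ) else 0, fun v hv => ?_, ?_⟩
  · rw [rInner_ind]
    exact hv.2 S hS
  · ext v
    constructor
    · rintro ⟨h1, h2⟩
      have h2' : (∑ i ∈ S, v i) = 0 := h2
      exact ⟨h1, by rw [Set.mem_setOf_eq, rInner_ind]; exact h2'⟩
    · rintro ⟨h1, h2⟩
      have h2' : rInner (fun i => if i ∈ S then (1:ℝ) else 0) v = 0 := h2
      rw [rInner_ind] at h2'
      exact ⟨h1, h2'⟩

/-- A good closed set yields a facet. -/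
lemma FSset_isFacet (hconn : Q.Connected) {S : Finset Q.V} (hS : QClosed Q S)
    (hSne : S.Nonempty) (hSproper : S ≠ Finset.univ)
    (hcS : ConnIn Q S) (hcSc : ConnIn Q Sᶜ) :
    IsFacet (coneQ Q) (FSset Q S) := by
  refine ⟨FSset_isFace hS, ?_⟩
  have h1 := finrank_span_FSset hS hSne hSproper hcS hcSc
  have h2 := span_coneQ hconn
  unfold coneDim
  omega

/-- Splitting a disconnected induced subgraph into two closed pieces. -/
lemma exists_split {X : Finset Q.V} (hne : X.Nonempty) (hnc : ¬ ConnIn Q X) :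
    ∃ T T' : Finset Q.V, T.Nonempty ∧ T'.Nonempty ∧ Disjoint T T' ∧ T ∪ T' = X ∧
      FClosed Q X T ∧ FClosed Q X T' := by
  unfold ConnIn at hnc
  push_neg at hnc
  obtain ⟨x, hx, y, hy, hxy⟩ := hnc hne
  set rel := fun p q => ∃ a, ((Q.s a = p ∧ Q.t a = q) ∨ (Q.s a = q ∧ Q.t a = p)) ∧
      Q.s a ∈ X ∧ Q.t a ∈ X with hrel
  set T : Finset Q.V := X.filter (fun j => Relation.ReflTransGen rel x j) with hTdef
  set T' : Finset Q.V := X \ T with hT'def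
  have hxT : x ∈ T := Finset.mem_filter.mpr ⟨hx, Relation.ReflTransGen.refl⟩
  have hyT' : y ∈ T' := by
    refine Finset.mem_sdiff.mpr ⟨hy, fun hc => hxy ?_⟩
    exact (Finset.mem_filter.mp hc).2
  have hTcl : FClosed Q X T := by
    refine ⟨Finset.filter_subset _ _, fun a hs ht => ?_⟩
    have hm := Finset.mem_filter.mp hs
    exact Finset.mem_filter.mpr ⟨ht, hm.2.tail ⟨a, Or.inl ⟨rfl, rfl⟩, hm.1, ht⟩⟩
  have hT'cl : FClosed Q X T' := by
    refine ⟨Finset.sdiff_subset, fun a hs ht => ?_⟩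
    have hm := Finset.mem_sdiff.mp hs
    refine Finset.mem_sdiff.mpr ⟨ht, fun hc => hm.2 ?_⟩
    have hrt := (Finset.mem_filter.mp hc).2
    exact Finset.mem_filter.mpr ⟨hm.1, hrt.tail ⟨a, Or.inr ⟨rfl, rfl⟩, hm.1, ht⟩⟩
  exact ⟨T, T', ⟨x, hxT⟩, ⟨y, hyT'⟩, Finset.disjoint_sdiff,
    Finset.union_sdiff_of_subset (Finset.filter_subset _ _), hTcl, hT'cl⟩

end Facet1

section Facet2

open Finset Module

variable {Q : FinQuiver}

lemma sum_eq_zero_of_mem_span {F : Set (Q.V → ℝ)} {T : Finset Q.V}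
    (hT : ∀ v ∈ F, (∑ i ∈ T, v i) = 0) {v : Q.V → ℝ}
    (hv : v ∈ Submodule.span ℝ F) : (∑ i ∈ T, v i) = 0 := by
  have hle : Submodule.span ℝ F ≤ LinearMap.ker (fSumL T) :=
    Submodule.span_le.mpr (fun u hu => LinearMap.mem_ker.mpr (hT u hu))
  exact hle hv

lemma three_sets {A B C : Finset Q.V} (hA : A.Nonempty) (hB : B.Nonempty) (hC : C.Nonempty)
    (hAB : Disjoint A B) (hAC : Disjoint A C) (hBC : Disjoint B C) :
    (∀ j : Fin 3, ((fun j : Fin 3 => if j = 0 then A else if j = 1 then B else C) j).Nonempty) ∧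
    (∀ j l : Fin 3, j ≠ l →
      Disjoint ((fun j : Fin 3 => if j = 0 then A else if j = 1 then B else C) j)
        ((fun j : Fin 3 => if j = 0 then A else if j = 1 then B else C) l)) := by
  constructor
  · intro j; fin_cases j <;> simpa using (by first | exact hA | exact hB | exact hC)
  · intro j l hjl
    fin_cases j <;> fin_cases l <;>
      simp_all [hAB, hAC, hBC, hAB.symm, hAC.symm, hBC.symm]

lemma fTriple_zero {A B C : Finset Q.V} {v : Q.V → ℝ}
    (hA : (∑ i ∈ A, v i) = 0) (hB : (∑ i ∈ B, v i) = 0) (hC : (∑ i ∈ C, v i) = 0) :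
    fMulti (fun j : Fin 3 => if j = 0 then A else if j = 1 then B else C) v = 0 := by
  funext j
  fin_cases j
  · simpa [fMulti_apply] using hA
  · simpa [fMulti_apply] using hB
  · simpa [fMulti_apply] using hC

lemma facet_structure (hconn : Q.Connected) {F : Set (Q.V → ℝ)}
    (hfacet : IsFacet (coneQ Q) F) :
    ∃ S : Finset Q.V, QClosed Q S ∧ S.Nonempty ∧ S ≠ Finset.univ ∧
      ConnIn Q S ∧ ConnIn Q Sᶜ ∧ F = FSset Q S := by
  obtain ⟨⟨a, ha1, ha2⟩, hdim⟩ := hfacet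
  have hFC : F ⊆ coneQ Q := by rw [ha2]; exact Set.inter_subset_left
  have hFr : ∀ v ∈ F, rInner a v = 0 := by
    intro v hv; rw [ha2] at hv; exact hv.2
  have hF0 : (0 : Q.V → ℝ) ∈ F := by
    rw [ha2]
    refine ⟨coneQ_zero, ?_⟩
    show rInner a 0 = 0
    simp [rInner]
  have hFadd : ∀ u v, u ∈ F → v ∈ F → u + v ∈ F := by
    intro u v hu hv
    rw [ha2] at hu hv ⊢
    refine ⟨coneQ_add hu.1 hv.1, ?_⟩
    show rInner a (u + v) = 0
    rw [rInner_add, hu.2, hv.2, add_zero]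
  have hFsmul : ∀ (c : ℝ) v, 0 ≤ c → v ∈ F → c • v ∈ F := by
    intro c v hc hv
    rw [ha2] at hv ⊢
    refine ⟨coneQ_smul hv.1 hc, ?_⟩
    show rInner a (c • v) = 0
    rw [rInner_smul, hv.2, mul_zero]
  set A : Finset (Finset Q.V) := Finset.univ.filter
    (fun T => QClosed Q T ∧ T.Nonempty ∧ T ≠ Finset.univ ∧
      ∀ v ∈ F, (∑ i ∈ T, v i) = 0) with hAdef
  set N : Finset (Finset Q.V) := Finset.univ.filter
    (fun T => QClosed Q T ∧ T.Nonempty ∧ T ≠ Finset.univ ∧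
      ¬(∀ v ∈ F, (∑ i ∈ T, v i) = 0)) with hNdef
  set g : Finset Q.V → (Q.V → ℝ) := fun T =>
    if h : ∃ v, v ∈ F ∧ (∑ i ∈ T, v i) = -1 then h.choose else 0 with hgdef
  have hgF : ∀ T, g T ∈ F := by
    intro T
    rw [hgdef]
    by_cases h : ∃ v, v ∈ F ∧ (∑ i ∈ T, v i) = -1
    · simp only [dif_pos h]; exact h.choose_spec.1
    · simp only [dif_neg h]; exact hF0
  have hgN : ∀ T ∈ N, (∑ i ∈ T, g T i) = -1 := by
    intro T hTN
    rw [hNdef] at hTN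
    obtain ⟨_, hTcl, _, _, hTne⟩ := Finset.mem_filter.mp hTN
    push_neg at hTne
    obtain ⟨v, hvF, hvne⟩ := hTne
    have hvle : (∑ i ∈ T, v i) ≤ 0 := (hFC hvF).2 T hTcl
    have hvlt : (∑ i ∈ T, v i) < 0 := lt_of_le_of_ne hvle hvne
    have hex : ∃ u, u ∈ F ∧ (∑ i ∈ T, u i) = -1 := by
      refine ⟨(-(∑ i ∈ T, v i))⁻¹ • v,
        hFsmul _ v (inv_nonneg.mpr (by linarith)) hvF, ?_⟩
      have : (∑ i ∈ T, ((-(∑ i ∈ T, v i))⁻¹ • v) i)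
          = (-(∑ i ∈ T, v i))⁻¹ * ∑ i ∈ T, v i := by
        simp [Finset.mul_sum]
      rw [this]
      field_simp
    rw [hgdef]
    simp only [dif_pos hex]
    exact hex.choose_spec.2
  set v₀ : Q.V → ℝ := ∑ T ∈ N, g T with hv₀def
  have hv₀F : v₀ ∈ F := by
    rw [hv₀def]
    exact Finset.sum_induction g (· ∈ F) (fun u v hu hv => hFadd u v hu hv) hF0
      (fun T _ => hgF T)
  have hswap : ∀ (W : Finset Q.V), (∑ i ∈ W, v₀ i) = ∑ T ∈ N, ∑ i ∈ W, g T i := by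
    intro W
    rw [hv₀def]
    have : ∀ i, (∑ T ∈ N, g T) i = ∑ T ∈ N, g T i := fun i => by simp
    rw [Finset.sum_congr rfl (fun i _ => this i), Finset.sum_comm]
  have hv₀N : ∀ T ∈ N, (∑ i ∈ T, v₀ i) ≤ -1 := by
    intro T hTN
    rw [hswap]
    have hTcl : QClosed Q T := by
      rw [hNdef] at hTN
      exact (Finset.mem_filter.mp hTN).2.1
    calc (∑ T' ∈ N, ∑ i ∈ T, g T' i)
        ≤ ∑ T' ∈ N, (if T' = T then (-1 : ℝ) else 0) := by
          refine Finset.sum_le_sum (fun T' _ => ?_)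
          by_cases hTT : T' = T
          · rw [if_pos hTT, hTT]
            exact le_of_eq (hgN T hTN)
          · rw [if_neg hTT]
            exact (hFC (hgF T')).2 T hTcl
      _ = -1 := by rw [Finset.sum_ite_eq' N T (fun _ => (-1:ℝ)), if_pos hTN]
  -- Claim 1 : F = coneQ ∩ {v | ∀ T ∈ A, sum = 0}
  have hFdesc : F = coneQ Q ∩ {v | ∀ T ∈ A, (∑ i ∈ T, v i) = 0} := by
    apply Set.Subset.antisymm
    · intro v hv
      refine ⟨hFC hv, fun T hTA => ?_⟩
      rw [hAdef] at hTA
      exact (Finset.mem_filter.mp hTA).2.2.2.2 v hv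
    · intro v hvmem
      obtain ⟨hvC, hvA⟩ := hvmem
      set Bv : ℝ := ∑ T ∈ (Finset.univ : Finset (Finset Q.V)), |∑ i ∈ T, v i| with hBv
      have hBnn : 0 ≤ Bv := Finset.sum_nonneg (fun T _ => abs_nonneg _)
      have hBle : ∀ T : Finset Q.V, |∑ i ∈ T, v i| ≤ Bv := by
        intro T
        rw [hBv]
        exact Finset.single_le_sum (f := fun T' : Finset Q.V => |∑ i ∈ T', v i|)
          (fun T' _ => abs_nonneg _) (Finset.mem_univ T)
      set t : ℝ := (1 + Bv)⁻¹ with ht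
      have htpos : 0 < t := by rw [ht]; positivity
      have htB : t * Bv < 1 := by
        rw [ht, inv_mul_lt_iff₀ (by linarith)]
        linarith
      set w : Q.V → ℝ := (1 + t) • v₀ + (-t) • v with hw
      have hwsum : ∀ W : Finset Q.V,
          (∑ i ∈ W, w i) = (1 + t) * (∑ i ∈ W, v₀ i) - t * (∑ i ∈ W, v i) := by
        intro W
        have hwi : ∀ i, w i = (1 + t) * v₀ i - t * v i := by
          intro i
          rw [hw]
          simp
          ring
        rw [Finset.sum_congr rfl (fun i _ => hwi i), Finset.sum_sub_distrib,
          ← Finset.mul_sum, ← Finset.mul_sum]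
      have hwC : w ∈ coneQ Q := by
        refine ⟨?_, fun T hT => ?_⟩
        · rw [hwsum]
          rw [(hFC hv₀F).1, hvC.1]
          ring
        · by_cases hTe : T.Nonempty
          · by_cases hTu : T = Finset.univ
            · subst hTu
              rw [hwsum, (hFC hv₀F).1, hvC.1]
              norm_num
            · by_cases hTA : ∀ u ∈ F, (∑ i ∈ T, u i) = 0
              · have hTA' : T ∈ A := by
                  rw [hAdef]
                  exact Finset.mem_filter.mpr ⟨Finset.mem_univ _, hT, hTe, hTu, hTA⟩
                rw [hwsum, hTA v₀ hv₀F, hvA T hTA']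
                norm_num
              · have hTN : T ∈ N := by
                  rw [hNdef]
                  exact Finset.mem_filter.mpr ⟨Finset.mem_univ _, hT, hTe, hTu, hTA⟩
                have h1 := hv₀N T hTN
                have h2 : t * (-(∑ i ∈ T, v i)) ≤ t * |∑ i ∈ T, v i| :=
                  mul_le_mul_of_nonneg_left (neg_le_abs _) (le_of_lt htpos)
                have h3 : t * |∑ i ∈ T, v i| ≤ t * Bv :=
                  mul_le_mul_of_nonneg_left (hBle T) (le_of_lt htpos)
                have h4 : (1 + t) * (∑ i ∈ T, v₀ i) ≤ (1 + t) * (-1) :=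
                  mul_le_mul_of_nonneg_left h1 (by linarith)
                rw [hwsum]
                nlinarith
          · rw [Finset.not_nonempty_iff_eq_empty] at hTe
            subst hTe
            simp
      have hra : rInner a w ≤ 0 := ha1 w hwC
      have hrweq : rInner a w = (1 + t) * rInner a v₀ + (-t) * rInner a v := by
        rw [hw, rInner_add, rInner_smul, rInner_smul]
      rw [hrweq, hFr v₀ hv₀F, mul_zero, zero_add] at hra
      have hrv : 0 ≤ rInner a v := by nlinarith
      have hrv2 : rInner a v ≤ 0 := ha1 v hvC
      rw [ha2]
      exact ⟨hvC, le_antisymm hrv2 hrv⟩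
  -- Claim 2 : A is nonempty
  have hAne : A.Nonempty := by
    rw [Finset.nonempty_iff_ne_empty]
    intro hAe
    have : F = coneQ Q := by
      rw [hFdesc, hAe]
      simp
    rw [this] at hdim
    omega
  obtain ⟨S, hSA⟩ := hAne
  have hSprop := Finset.mem_filter.mp (hAdef ▸ hSA)
  obtain ⟨_, hScl, hSne, hSproper, hSvan⟩ := hSprop
  -- F ⊆ FSset S
  have hFsub : F ⊆ FSset Q S := fun v hv => ⟨hFC hv, hSvan v hv⟩
  -- span chain
  have hFSker : FSset Q S ⊆ {v | fPair S v = 0} := fun v hv => FSset_subset_ker hv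
  have hspan1 : Submodule.span ℝ F ≤ Submodule.span ℝ (FSset Q S) :=
    Submodule.span_mono hFsub
  have hspan2 : Submodule.span ℝ (FSset Q S) ≤ LinearMap.ker (fPair S) :=
    Submodule.span_le.mpr (fun v hv => LinearMap.mem_ker.mpr (hFSker hv))
  have hker2 := finrank_ker_fPair (Q := Q) hSne hSproper
  have hcone1 := span_coneQ hconn
  have hFrank : finrank ℝ (Submodule.span ℝ F) + 2 = Fintype.card Q.V := by
    unfold coneDim at hdim
    omega
  have hspanF_eq : Submodule.span ℝ F = LinearMap.ker (fPair S) := by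
    refine Submodule.eq_of_le_of_finrank_le (le_trans hspan1 hspan2) ?_
    omega
  have hspanFS_eq : Submodule.span ℝ (FSset Q S) = LinearMap.ker (fPair S) :=
    le_antisymm hspan2 (hspanF_eq ▸ hspan1)
  -- F = FSset S
  have hFeq : F = FSset Q S := by
    apply Set.Subset.antisymm hFsub
    intro v hv
    rw [hFdesc]
    refine ⟨hv.1, fun T hTA => ?_⟩
    have hvspan : v ∈ Submodule.span ℝ F := by
      rw [hspanF_eq, ← hspanFS_eq]
      exact Submodule.subset_span hv
    exact sum_eq_zero_of_mem_span ((Finset.mem_filter.mp (hAdef ▸ hTA)).2.2.2.2) hvspan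
  have hFSrank : finrank ℝ (Submodule.span ℝ (FSset Q S)) + 2 = Fintype.card Q.V := by
    rw [hspanFS_eq]; omega
  have hScne : Sᶜ.Nonempty := by
    rw [Finset.nonempty_iff_ne_empty]
    intro hc
    exact hSproper (by simpa using congrArg compl hc)
  -- Connectivity of S
  have hcS : ConnIn Q S := by
    by_contra hnc
    obtain ⟨T, T', hTne, hT'ne, hdisj, hunion, hTcl, hT'cl⟩ := exists_split hSne hnc
    have hTS : T ⊆ S := hTcl.1
    have hT'S : T' ⊆ S := hT'cl.1
    have hdTc : Disjoint T Sᶜ := Finset.disjoint_left.mpr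
      (fun i hi hic => (Finset.mem_compl.mp hic) (hTS hi))
    have hdT'c : Disjoint T' Sᶜ := Finset.disjoint_left.mpr
      (fun i hi hic => (Finset.mem_compl.mp hic) (hT'S hi))
    obtain ⟨hm3ne, hm3disj⟩ := three_sets hTne hT'ne hScne hdisj hdTc hdT'c
    have hker3 := fMulti_ker_finrank hm3ne hm3disj
    have hsub3 : FSset Q S ⊆ {v | fMulti
        (fun j : Fin 3 => if j = 0 then T else if j = 1 then T' else Sᶜ) v = 0} := by
      intro v hv
      have hT0 : (∑ i ∈ T, v i) ≤ 0 := hv.1.2 T (qclosed_of_fclosed_sub hScl hTcl)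
      have hT'0 : (∑ i ∈ T', v i) ≤ 0 := hv.1.2 T' (qclosed_of_fclosed_sub hScl hT'cl)
      have hsum : (∑ i ∈ T, v i) + (∑ i ∈ T', v i) = ∑ i ∈ S, v i := by
        rw [← Finset.sum_union hdisj, hunion]
      have hS0 : (∑ i ∈ S, v i) = 0 := hv.2
      have hSc0 : (∑ i ∈ Sᶜ, v i) = 0 := by
        have := Finset.sum_add_sum_compl S v
        have h1 := hv.1.1
        linarith
      exact fTriple_zero (by linarith) (by linarith) hSc0
    have hspan3 : Submodule.span ℝ (FSset Q S) ≤ LinearMap.ker (fMulti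
        (fun j : Fin 3 => if j = 0 then T else if j = 1 then T' else Sᶜ)) :=
      Submodule.span_le.mpr (fun v hv => LinearMap.mem_ker.mpr (hsub3 hv))
    have := Submodule.finrank_mono hspan3
    omega
  -- Connectivity of Sᶜ
  have hcSc : ConnIn Q Sᶜ := by
    by_contra hnc
    obtain ⟨U, U', hUne, hU'ne, hdisj, hunion, hUcl, hU'cl⟩ := exists_split hScne hnc
    have hUS : U ⊆ Sᶜ := hUcl.1
    have hU'S : U' ⊆ Sᶜ := hU'cl.1
    have hdUS : Disjoint S U := Finset.disjoint_left.mpr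
      (fun i hi hiu => (Finset.mem_compl.mp (hUS hiu)) hi)
    have hdU'S : Disjoint S U' := Finset.disjoint_left.mpr
      (fun i hi hiu => (Finset.mem_compl.mp (hU'S hiu)) hi)
    obtain ⟨hm3ne, hm3disj⟩ := three_sets hSne hUne hU'ne hdUS hdU'S hdisj
    have hker3 := fMulti_ker_finrank hm3ne hm3disj
    have hsub3 : FSset Q S ⊆ {v | fMulti
        (fun j : Fin 3 => if j = 0 then S else if j = 1 then U else U') v = 0} := by
      intro v hv
      have hS0 : (∑ i ∈ S, v i) = 0 := hv.2
      have hSc0 : (∑ i ∈ Sᶜ, v i) = 0 := by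
        have := Finset.sum_add_sum_compl S v
        have h1 := hv.1.1
        linarith
      have hU0 : (∑ i ∈ U, v i) ≤ 0 := by
        have h1 : (∑ i ∈ S ∪ U, v i) ≤ 0 :=
          hv.1.2 _ (qclosed_union_of_fclosed_compl hScl hUcl)
        rw [Finset.sum_union hdUS] at h1
        linarith
      have hU'0 : (∑ i ∈ U', v i) ≤ 0 := by
        have h1 : (∑ i ∈ S ∪ U', v i) ≤ 0 :=
          hv.1.2 _ (qclosed_union_of_fclosed_compl hScl hU'cl)
        rw [Finset.sum_union hdU'S] at h1
        linarith
      have hsum : (∑ i ∈ U, v i) + (∑ i ∈ U', v i) = ∑ i ∈ Sᶜ, v i := by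
        rw [← Finset.sum_union hdisj, hunion]
      exact fTriple_zero hS0 (by linarith) (by linarith)
    have hspan3 : Submodule.span ℝ (FSset Q S) ≤ LinearMap.ker (fMulti
        (fun j : Fin 3 => if j = 0 then S else if j = 1 then U else U')) :=
      Submodule.span_le.mpr (fun v hv => LinearMap.mem_ker.mpr (hsub3 hv))
    have := Submodule.finrank_mono hspan3
    omega
  exact ⟨S, hScl, hSne, hSproper, hcS, hcSc, hFeq⟩

end Facet2

section Final

open Finset Module

variable {K : Type} [Field K] {Q : FinQuiver}

lemma ThinOn.suppF_toSub {R : QRep K Q} {X : Finset Q.V} (h : ThinOn R X)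
    {T : Finset Q.V} (hT : FClosed Q X T) : (h.toSub hT).suppF = T := by
  ext i
  simp only [QSubRep.suppF, Finset.mem_filter, Finset.mem_univ, true_and]
  constructor
  · intro hne
    by_contra hiT
    exact hne (by simp [ThinOn.toSub, hiT])
  · intro hiT
    exact h.toSub_ne_bot hT hiT

lemma stabInner_trunc {R : QRep K Q} (v : Q.V → ℝ) {d : Q.V → ℕ}
    (hd : ∀ i, i ∉ R.supp → d i = 0) :
    stabInner (fun i => if i ∈ R.supp then v i else 0) d = stabInner v d := by
  refine Finset.sum_congr rfl (fun i _ => ?_)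
  by_cases hi : i ∈ R.supp
  · simp [hi]
  · simp [hi, hd i hi]

lemma isSemistable_trunc (R : QRep K Q) (v : Q.V → ℝ) :
    IsSemistable R (fun i => if i ∈ R.supp then v i else 0) ↔ IsSemistable R v := by
  have hd : ∀ i, i ∉ R.supp → R.dimVec i = 0 := by
    intro i hi
    by_contra hc
    exact hi hc
  have hdN : ∀ (N : QSubRep R) (i : Q.V), i ∉ R.supp → finrank K (N.L i) = 0 := by
    intro N i hi
    have h0 : finrank K (R.M i) = 0 := by
      by_contra hc
      exact hi hc
    have := Submodule.finrank_le (N.L i)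
    omega
  unfold IsSemistable
  rw [stabInner_trunc v hd]
  constructor
  · rintro ⟨h1, h2⟩
    refine ⟨h1, fun N => ?_⟩
    have := h2 N
    rwa [stabInner_trunc v (hdN N)] at this
  · rintro ⟨h1, h2⟩
    refine ⟨h1, fun N => ?_⟩
    rw [stabInner_trunc v (hdN N)]
    exact h2 N

/-- Main bridge: the pair-semistability set is `FSset` of the support. -/
lemma pair_set_eq_FSset {M : QRep K Q} (hM : ThinOn M Finset.univ) (L : QSubRep M) :
    {v : Q.V → ℝ | IsSemistable L.toRep v ∧ IsSemistable (M.quotBy L) v} =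
      FSset Q L.suppF := by
  ext v
  rw [Set.mem_setOf_eq, pair_semistable_iff hM L]
  constructor
  · rintro ⟨h1, h2⟩
    have : v ∈ stabSpace M := h1
    rw [stabSpace_eq_coneQ hM] at this
    exact ⟨this, h2⟩
  · rintro ⟨h1, h2⟩
    have : v ∈ stabSpace M := by rw [stabSpace_eq_coneQ hM]; exact h1
    exact ⟨this, h2⟩

end Final
/-- For an indecomposable thin sincere representation `M` of a connected
quiver (all arrow maps nonzero), the facets of `D(M)` are exactly the sets
`F_L = {v : L and M/L are v-semistable}` where `L` runs over nonzero proper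
subrepresentations with `L` and `M/L` indecomposable; moreover each `F_L` decomposes as the
product `D_supp(L) × D_supp(M/L)` with respect to the coordinate decomposition of `ℝ^{Q₀}`
along the supports. -/
theorem facets_of_stability_space_of_thin_module (K : Type) [Field K] (Q : FinQuiver)
    (hconn : Q.Connected) (M : QRep K Q)
    (hthin : ∀ i, Module.finrank K (M.M i) = 1)
    (hnz : ∀ a : Q.A, M.φ a ≠ 0) :
    ({F | IsFacet (stabSpace M) F} =
      {F | ∃ L : QSubRep M, (∃ i, L.L i ≠ ⊥) ∧ (∃ i, L.L i ≠ ⊤) ∧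
        Indecomposable L.toRep ∧ Indecomposable (M.quotBy L) ∧
        F = {v : Q.V → ℝ | IsSemistable L.toRep v ∧ IsSemistable (M.quotBy L) v}}) ∧
      ∀ L : QSubRep M, (∃ i, L.L i ≠ ⊥) → (∃ i, L.L i ≠ ⊤) →
        Indecomposable L.toRep → Indecomposable (M.quotBy L) →
        {v : Q.V → ℝ | IsSemistable L.toRep v ∧ IsSemistable (M.quotBy L) v} =
          {v : Q.V → ℝ |
            (fun i => if i ∈ L.toRep.supp then v i else 0) ∈ stabSpace L.toRep ∧
            (fun i => if i ∈ (M.quotBy L).supp then v i else 0) ∈ stabSpace (M.quotBy L)} := by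
  have hM : ThinOn M Finset.univ := thinOn_univ hthin hnz
  constructor
  · ext F
    simp only [Set.mem_setOf_eq]
    constructor
    · intro hfacet
      rw [stabSpace_eq_coneQ hM] at hfacet
      obtain ⟨S, hScl, hSne, hSproper, hcS, hcSc, hFeq⟩ := facet_structure hconn hfacet
      set L := hM.toSub hScl with hL
      have hsupp : L.suppF = S := hM.suppF_toSub hScl
      refine ⟨L, ?_, ?_, ?_, ?_, ?_⟩
      · obtain ⟨i, hi⟩ := hSne
        exact ⟨i, hM.toSub_ne_bot hScl hi⟩
      · obtain ⟨i, hi⟩ : ∃ i, i ∉ S := by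
          by_contra h
          push_neg at h
          exact hSproper (Finset.eq_univ_iff_forall.mpr h)
        refine ⟨i, ?_⟩
        have hbot : L.L i = ⊥ := by simp [hL, ThinOn.toSub, hi]
        rw [hbot]
        have := hM.nontrivial (Finset.mem_univ i)
        exact bot_ne_top
      · exact (thinOn_toRep hM L).indecomposable_of_connIn (by rw [hsupp]; exact hcS)
      · exact (thinOn_quotBy hM L).indecomposable_of_connIn (by rw [hsupp]; exact hcSc)
      · rw [hFeq, ← hsupp, ← pair_set_eq_FSset hM L]
    · rintro ⟨L, ⟨i0, hi0⟩, ⟨i1, hi1⟩, hind1, hind2, hFeq⟩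
      have hSne : L.suppF.Nonempty := ⟨i0, Finset.mem_filter.mpr ⟨Finset.mem_univ _, hi0⟩⟩
      have hSproper : L.suppF ≠ Finset.univ := by
        intro hc
        exact hi1 (hM.eq_top_of_mem_suppF L (by rw [hc]; exact Finset.mem_univ i1))
      have hScl : QClosed Q L.suppF := hM.suppF_closed L
      have hcS : ConnIn Q L.suppF := (thinOn_toRep hM L).connIn_of_indecomposable hind1
      have hcSc : ConnIn Q L.suppFᶜ := (thinOn_quotBy hM L).connIn_of_indecomposable hind2
      rw [hFeq, pair_set_eq_FSset hM L, stabSpace_eq_coneQ hM]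
      exact FSset_isFacet hconn hScl hSne hSproper hcS hcSc
  · intro L _ _ _ _
    ext v
    simp only [Set.mem_setOf_eq]
    have h1 := isSemistable_trunc L.toRep v
    have h2 := isSemistable_trunc (M.quotBy L) v
    exact and_congr h1.symm h2.symm
end

section
/- Let P be a finite connected poset and K a field. Then: (1) for every connected compatible partition (P_1,…,P_k) of P there exist a permutation σ of {1,…,k} and a filtration 0 = L_0 ⊂ L_1 ⊂ ⋯ ⊂ L_k = M_P by subrepresentations with L_j/L_{j−1} ≅ M_{P_{σ(j)}} for all j, and each M_{P_i} is indecomposable; (2) conversely, for every filtration 0 = L_0 ⊂ L_1 ⊂ ⋯ ⊂ L_k = M_P by subrepresentations all of whose successive quotients are indecomposable, there is a connected compatible partition (P_1,…,P_k) of P such that L_j/L_{j−1} ≅ M_{P_j} for all j. -/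
attribute [local instance] Classical.propDecidable

/-- The Hasse quiver of a finite poset: one arrow `y → x` for each covering relation `x ⋖ y`. -/
noncomputable def hasseQuiver (P : Type) [PartialOrder P] [Fintype P] [DecidableEq P] :
    FinQuiver where
  V := P
  A := {q : P × P // q.1 ⋖ q.2}
  fintypeA := Fintype.ofFinite _
  s q := q.1.2
  t q := q.1.1

/-- The representation `M_S` of the Hasse quiver of `P` attached to a subset `S ⊆ P`:
a copy of `K` at each element of `S`, zero elsewhere, identity maps whenever possible. -/
noncomputable def MS (K : Type) [Field K] (P : Type) [PartialOrder P] [Fintype P]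
    [DecidableEq P] (S : Finset P) : QRep K (hasseQuiver P) where
  M p := ↥(if p ∈ S then (⊤ : Submodule K K) else ⊥)
  φ a :=
    if h : (hasseQuiver P).s a ∈ S ∧ (hasseQuiver P).t a ∈ S then
      { toFun := fun x => ⟨(x : K), by simp [h.2]⟩
        map_add' := fun x y => rfl
        map_smul' := fun c x => rfl }
    else 0

/-- The covering relation of the subposet induced on a subset `S`. -/
def covIn {P : Type} [PartialOrder P] (S : Finset P) (x y : P) : Prop :=
  x ∈ S ∧ y ∈ S ∧ x < y ∧ ∀ z ∈ S, ¬(x < z ∧ z < y)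

/-- Connectivity of the Hasse diagram of the subposet induced on `S`. -/
def connectedIn {P : Type} [PartialOrder P] (S : Finset P) : Prop :=
  ∀ x ∈ S, ∀ y ∈ S, Relation.ReflTransGen (fun u v => covIn S u v ∨ covIn S v u) x y

/-- Connectivity of a poset: its Hasse diagram is connected. -/
def posetConnected (P : Type) [PartialOrder P] : Prop :=
  Nonempty P ∧ ∀ x y : P, Relation.ReflTransGen (fun u v => u ⋖ v ∨ v ⋖ u) x y

/-- A partition of `P` into `k` blocks, given as a function `Fin k → Finset P`. -/
def IsFinPartition {P : Type} (k : ℕ) (B : Fin k → Finset P) : Prop :=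
  (∀ i, (B i).Nonempty) ∧ (∀ i j, i ≠ j → Disjoint (B i) (B j)) ∧ ∀ p : P, ∃ i, p ∈ B i

/-- The quotient relation on the blocks of a partition. -/
def blockRel {P : Type} [PartialOrder P] {k : ℕ} (B : Fin k → Finset P) (i j : Fin k) : Prop :=
  ∃ p ∈ B i, ∃ q ∈ B j, p ≤ q

/-- Compatibility of a partition: the transitive closure of the quotient relation is
antisymmetric (hence a partial order on the blocks). -/
def compatiblePart {P : Type} [PartialOrder P] {k : ℕ} (B : Fin k → Finset P) : Prop :=
  ∀ i j, Relation.TransGen (blockRel B) i j → Relation.TransGen (blockRel B) j i → i = j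

/-- The quotient relation on the blocks of a partition given as a finite set of blocks. -/
def blockRelF {P : Type} [PartialOrder P] (π : Finset (Finset P)) (S T : Finset P) : Prop :=
  S ∈ π ∧ T ∈ π ∧ ∃ p ∈ S, ∃ q ∈ T, p ≤ q

/-- The set of connected compatible partitions of `P`, viewed as finite sets of blocks. -/
def CCpartitions (P : Type) [PartialOrder P] [Fintype P] [DecidableEq P] :
    Set (Finset (Finset P)) :=
  {π | (∀ S ∈ π, S.Nonempty) ∧ (∀ S ∈ π, ∀ T ∈ π, S ≠ T → Disjoint S T) ∧
       (∀ p : P, ∃ S ∈ π, p ∈ S) ∧ (∀ S ∈ π, connectedIn S) ∧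
       ∀ S T : Finset P, Relation.TransGen (blockRelF π) S T →
         Relation.TransGen (blockRelF π) T S → S = T}

/-- `T` is a lower set of the subposet induced on the block `S`. -/
def lowerInBlock {P : Type} [PartialOrder P] (S T : Finset P) : Prop :=
  T ⊆ S ∧ ∀ x ∈ S, ∀ y ∈ T, x ≤ y → x ∈ T

/-- The set `F_π` attached to a partition `π` of `P`. -/
def Fpi (K : Type) [Field K] (P : Type) [PartialOrder P] [Fintype P] [DecidableEq P]
    (π : Finset (Finset P)) : Set (P → ℝ) :=
  {v | v ∈ stabSpace (thinRep K (hasseQuiver P)) ∧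
    ∀ S ∈ π, (∑ p ∈ S, v p = 0) ∧ ∀ T : Finset P, lowerInBlock S T → ∑ p ∈ T, v p ≤ 0}

attribute [reducible] hasseQuiver thinRep
attribute [-instance] Finset.decidableMem
set_option linter.unusedSectionVars false
set_option linter.unnecessarySimpa false
set_option linter.unusedVariables false

section Helpers

lemma crossing {α : Type*} {r : α → α → Prop} {Pr : α → Prop} {x y : α}
    (h : Relation.ReflTransGen r x y) (hx : Pr x) (hy : ¬ Pr y) :
    ∃ u v, r u v ∧ Pr u ∧ ¬ Pr v := by
  induction h with
  | refl => exact absurd hx hy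
  | @tail b c hab hbc ih =>
    by_cases hb : Pr b
    · exact ⟨b, c, hbc, hb, hy⟩
    · exact ih hb

variable {P : Type} [PartialOrder P] [Fintype P] [DecidableEq P]

lemma reflTransGen_covBy_of_le {x y : P} (h : x ≤ y) :
    Relation.ReflTransGen (· ⋖ ·) x y := by
  letI := Fintype.toLocallyFiniteOrder (α := P)
  exact le_iff_reflTransGen_covBy.mp h

lemma lower_of_covClosed {T : Set P} (hT : ∀ x y : P, x ⋖ y → y ∈ T → x ∈ T)
    {x y : P} (hxy : x ≤ y) (hy : y ∈ T) : x ∈ T := by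
  have H : ∀ {a b : P}, Relation.ReflTransGen (· ⋖ ·) a b → b ∈ T → a ∈ T := by
    intro a b hab
    induction hab with
    | refl => exact id
    | tail h1 h2 ih => exact fun hc => ih (hT _ _ h2 hc)
  exact H (reflTransGen_covBy_of_le hxy) hy

variable {K : Type} [Field K]

lemma subK_cases (N : Submodule K K) : N = ⊥ ∨ N = ⊤ :=
  Ideal.eq_bot_or_top N

lemma subK_top (N : Submodule K K) (h : (1 : K) ∈ N) : N = ⊤ := by
  rcases subK_cases N with h' | h'
  · rw [h'] at h; exact absurd ((Submodule.mem_bot K).mp h) one_ne_zero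
  · exact h'

lemma subK_bot_ne_top : (⊥ : Submodule K K) ≠ ⊤ := by
  intro h
  have h1 : (1 : K) ∈ (⊥ : Submodule K K) := by rw [h]; trivial
  exact one_ne_zero ((Submodule.mem_bot K).mp h1)

lemma sub_eq_bot_of_subsingleton {M : Type*} [AddCommGroup M] [Module K M]
    [Subsingleton M] (N : Submodule K M) : N = ⊥ := by
  ext z
  simp [Subsingleton.elim z 0]

lemma bot_eq_top_of_subsingleton {M : Type*} [AddCommGroup M] [Module K M]
    [Subsingleton M] : (⊥ : Submodule K M) = ⊤ :=
  (sub_eq_bot_of_subsingleton ⊤).symm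

lemma rank1_sub {M : Type*} [AddCommGroup M] [Module K M] [FiniteDimensional K M]
    (h1 : Module.finrank K M = 1) (N : Submodule K M) : N = ⊥ ∨ N = ⊤ := by
  have hle : Module.finrank K N ≤ 1 := h1 ▸ Submodule.finrank_le N
  interval_cases hN : Module.finrank K N
  · exact Or.inl (Submodule.finrank_eq_zero.mp hN)
  · exact Or.inr (Submodule.eq_top_of_finrank_eq (by rw [hN, h1]))

lemma not_both_rank1 {M : Type*} [AddCommGroup M] [Module K M] [FiniteDimensional K M]
    (h1 : Module.finrank K M = 1) {N N' : Submodule K M}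
    (hinf : N ⊓ N' = ⊥) (hN : N ≠ ⊥) (hN' : N' ≠ ⊥) : False := by
  rcases rank1_sub h1 N with h | h; · exact hN h
  rcases rank1_sub h1 N' with h' | h'; · exact hN' h'
  rw [h, h', inf_idem] at hinf
  haveI : Subsingleton M := by
    constructor; intro a b
    have ha : a ∈ (⊤ : Submodule K M) := trivial
    have hb : b ∈ (⊤ : Submodule K M) := trivial
    rw [hinf] at ha hb
    simp only [Submodule.mem_bot] at ha hb
    rw [ha, hb]
  rw [Module.finrank_zero_of_subsingleton] at h1
  exact absurd h1 (by norm_num)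

lemma quot_subsingleton' {M : Type*} [AddCommGroup M] [Module K M]
    {N N' : Submodule K M} (hNN' : N = N') :
    Subsingleton (↥N' ⧸ Submodule.comap N'.subtype N) := by
  rw [Submodule.Quotient.subsingleton_iff]
  ext x
  simp only [Submodule.mem_comap, Submodule.subtype_apply, Submodule.mem_top, iff_true]
  rw [hNN']
  exact x.2

lemma quot_finrank_one' {M : Type*} [AddCommGroup M] [Module K M] [FiniteDimensional K M]
    (hM : Module.finrank K M = 1) {N N' : Submodule K M} (hb : N = ⊥) (ht : N' = ⊤) :
    Module.finrank K (↥N' ⧸ Submodule.comap N'.subtype N) = 1 := by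
  subst hb; subst ht
  rw [Submodule.comap_bot, Submodule.ker_subtype]
  rw [(Submodule.quotEquivOfEqBot (⊥ : Submodule K ↥(⊤ : Submodule K M)) rfl).finrank_eq]
  rw [finrank_top]
  exact hM

end Helpers
section PosetRep

variable {K : Type} [Field K] {P : Type} [PartialOrder P] [Fintype P] [DecidableEq P]

def covArrow {x y : P} (h : x ⋖ y) : (hasseQuiver P).A := ⟨(x, y), h⟩
attribute [reducible] covArrow

@[simp] lemma covArrow_s {x y : P} (h : x ⋖ y) : (hasseQuiver P).s (covArrow h) = y := rfl
@[simp] lemma covArrow_t {x y : P} (h : x ⋖ y) : (hasseQuiver P).t (covArrow h) = x := rfl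

lemma thin_finrank (p : P) : Module.finrank K ((thinRep K (hasseQuiver P)).M p) = 1 :=
  Module.finrank_self K

lemma thin_sub_top_of_le (N : QSubRep (thinRep K (hasseQuiver P))) {x y : P}
    (hxy : x ≤ y) (hy : N.L y = ⊤) : N.L x = ⊤ := by
  refine lower_of_covClosed (T := {p : P | N.L p = ⊤}) ?_ hxy hy
  intro a b hab hb
  have h1 : (1 : K) ∈ N.L b := by rw [hb]; trivial
  have h2 := N.compat (covArrow hab) (1 : K) h1
  exact subK_top _ h2

lemma thin_L_cases (N : QSubRep (thinRep K (hasseQuiver P))) (p : P) :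
    N.L p = ⊥ ∨ N.L p = ⊤ :=
  subK_cases (N.L p)

lemma MS_subsingleton {S : Finset P} {p : P} (hp : p ∉ S) :
    Subsingleton ((MS K P S).M p) := by
  show Subsingleton ↥(if p ∈ S then (⊤ : Submodule K K) else ⊥)
  rw [if_neg hp]
  infer_instance

lemma MS_finrank {S : Finset P} {p : P} (hp : p ∈ S) :
    Module.finrank K ((MS K P S).M p) = 1 := by
  show Module.finrank K ↥(if p ∈ S then (⊤ : Submodule K K) else ⊥) = 1
  rw [if_pos hp, finrank_top, Module.finrank_self]

noncomputable def MSval {S : Finset P} {p : P} (u : (MS K P S).M p) : K :=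
  (show ↥(if p ∈ S then (⊤ : Submodule K K) else ⊥) from u).1

lemma MSval_inj {S : Finset P} {p : P} {u v : (MS K P S).M p} (h : MSval u = MSval v) :
    u = v :=
  Subtype.ext h

lemma MSval_zero {S : Finset P} {p : P} : MSval (0 : (MS K P S).M p) = 0 := rfl

noncomputable def MSone {S : Finset P} {p : P} (hp : p ∈ S) : (MS K P S).M p :=
  ⟨1, by rw [if_pos hp]; trivial⟩

lemma MSone_val {S : Finset P} {p : P} (hp : p ∈ S) : MSval (MSone (K := K) hp) = (1 : K) := rfl

lemma MSone_ne_zero {S : Finset P} {p : P} (hp : p ∈ S) : MSone (K := K) hp ≠ 0 := by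
  intro h
  have h2 : MSval (MSone hp) = MSval (0 : (MS K P S).M p) := by rw [h]
  rw [MSone_val, MSval_zero] at h2
  exact one_ne_zero h2

lemma MS_top_ne_bot {S : Finset P} {p : P} (hp : p ∈ S) :
    (⊤ : Submodule K ((MS K P S).M p)) ≠ ⊥ := by
  intro h
  have hnz := MSone_ne_zero (K := K) hp
  have hm : MSone (K := K) hp ∈ (⊤ : Submodule K ((MS K P S).M p)) := trivial
  rw [h, Submodule.mem_bot] at hm
  exact hnz hm

lemma MS_phi_eq {S : Finset P} (a : (hasseQuiver P).A) :
    (MS K P S).φ a = (if h : (hasseQuiver P).s a ∈ S ∧ (hasseQuiver P).t a ∈ S then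
      ({ toFun := fun x => ⟨(x : K), by simp [h.2]⟩
         map_add' := fun x y => rfl
         map_smul' := fun c x => rfl } :
        ↥(if (hasseQuiver P).s a ∈ S then (⊤ : Submodule K K) else ⊥) →ₗ[K]
        ↥(if (hasseQuiver P).t a ∈ S then (⊤ : Submodule K K) else ⊥))
      else 0) := rfl

lemma MS_phi_val {S : Finset P} (a : (hasseQuiver P).A)
    (h : (hasseQuiver P).s a ∈ S ∧ (hasseQuiver P).t a ∈ S)
    (v : (MS K P S).M ((hasseQuiver P).s a)) :
    MSval ((MS K P S).φ a v) = MSval v := by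
  rw [MS_phi_eq, dif_pos h]
  rfl

lemma MS_phi_zero {S : Finset P} (a : (hasseQuiver P).A)
    (h : ¬((hasseQuiver P).s a ∈ S ∧ (hasseQuiver P).t a ∈ S)) :
    (MS K P S).φ a = 0 := by
  rw [MS_phi_eq, dif_neg h]
  rfl

noncomputable def lowerSubRep (T : Finset P)
    (hT : ∀ x y : P, x ⋖ y → y ∈ T → x ∈ T) : QSubRep (thinRep K (hasseQuiver P)) where
  L p := if p ∈ T then (⊤ : Submodule K K) else ⊥
  compat := by
    intro a v hv
    dsimp only at hv ⊢
    by_cases hs : (hasseQuiver P).s a ∈ T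
    · have ht : (hasseQuiver P).t a ∈ T := hT _ _ a.2 hs
      rw [if_pos ht]
      trivial
    · rw [if_neg hs] at hv
      have hv0 : v = (0 : K) := (Submodule.mem_bot K).mp hv
      rw [hv0, map_zero]
      exact Submodule.zero_mem _

lemma lowerSubRep_L (T : Finset P) (hT : ∀ x y : P, x ⋖ y → y ∈ T → x ∈ T) (p : P) :
    (lowerSubRep (K := K) T hT).L p = if p ∈ T then (⊤ : Submodule K K) else ⊥ := rfl

lemma lowerSubRep_le {T T' : Finset P} (hT : ∀ x y : P, x ⋖ y → y ∈ T → x ∈ T)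
    (hT' : ∀ x y : P, x ⋖ y → y ∈ T' → x ∈ T') (hsub : T ⊆ T') :
    QSubRep.le (lowerSubRep (K := K) T hT) (lowerSubRep (K := K) T' hT') := by
  intro p
  rw [lowerSubRep_L, lowerSubRep_L]
  by_cases hp : p ∈ T
  · rw [if_pos hp, if_pos (hsub hp)]
  · rw [if_neg hp]
    exact bot_le

end PosetRep
section QuotIso

variable {K : Type} [Field K] {P : Type} [PartialOrder P] [Fintype P] [DecidableEq P]

noncomputable def gMap (N' : QSubRep (thinRep K (hasseQuiver P))) (S : Finset P) (p : P) :
    ↥(N'.L p) →ₗ[K] (MS K P S).M p :=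
  if hp : p ∈ S then
    { toFun := fun x => ⟨x.1, by rw [if_pos hp]; trivial⟩
      map_add' := fun x y => rfl
      map_smul' := fun c x => rfl }
  else 0

lemma gMap_val {N' : QSubRep (thinRep K (hasseQuiver P))} {S : Finset P} {p : P}
    (hp : p ∈ S) (x : ↥(N'.L p)) :
    MSval (gMap N' S p x) = x.1 := by
  unfold gMap
  rw [dif_pos hp]
  rfl

lemma gMap_zero' {N' : QSubRep (thinRep K (hasseQuiver P))} {S : Finset P} {p : P}
    (hp : p ∉ S) : gMap N' S p = 0 := by
  unfold gMap
  rw [dif_neg hp]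

lemma thin_off (N N' : QSubRep (thinRep K (hasseQuiver P))) (h : QSubRep.le N N')
    {S : Finset P} (hS : ∀ p : P, p ∈ S ↔ (N.L p = ⊥ ∧ N'.L p = ⊤)) {p : P}
    (hp : p ∉ S) : N.L p = N'.L p := by
  rcases thin_L_cases N' p with h' | h'
  · have h0 : N.L p = ⊥ := le_bot_iff.mp (h' ▸ h p)
    rw [h0, h']
  · rcases thin_L_cases N p with h0 | h0
    · exact absurd ((hS p).mpr ⟨h0, h'⟩) hp
    · rw [h0, h']

lemma gMap_ker (N N' : QSubRep (thinRep K (hasseQuiver P))) (h : QSubRep.le N N')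
    (S : Finset P) (hS : ∀ p : P, p ∈ S ↔ (N.L p = ⊥ ∧ N'.L p = ⊤)) (p : P) :
    Submodule.comap (N'.L p).subtype (N.L p) ≤ LinearMap.ker (gMap N' S p) := by
  intro x hx
  rw [Submodule.mem_comap] at hx
  rw [LinearMap.mem_ker]
  by_cases hp : p ∈ S
  · have hb : N.L p = ⊥ := ((hS p).mp hp).1
    rw [hb, Submodule.mem_bot] at hx
    apply MSval_inj
    rw [gMap_val hp, MSval_zero]
    exact hx
  · rw [gMap_zero' hp]
    simp

lemma quotThin_phi (N N' : QSubRep (thinRep K (hasseQuiver P))) (h : QSubRep.le N N')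
    (a : (hasseQuiver P).A) (z : ↥(N'.L ((hasseQuiver P).s a))) :
    (quotRep (thinRep K (hasseQuiver P)) N N' h).φ a (Submodule.Quotient.mk z) =
      Submodule.Quotient.mk (((thinRep K (hasseQuiver P)).φ a).restrict
        (fun x hx => N'.compat a x hx) z) :=
  rfl

lemma quotThin_finrank (N N' : QSubRep (thinRep K (hasseQuiver P))) (h : QSubRep.le N N')
    {p : P} (hb : N.L p = ⊥) (ht : N'.L p = ⊤) :
    Module.finrank K ((quotRep (thinRep K (hasseQuiver P)) N N' h).M p) = 1 :=
  quot_finrank_one' (thin_finrank p) hb ht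

lemma quotThin_subsingleton (N N' : QSubRep (thinRep K (hasseQuiver P)))
    (h : QSubRep.le N N') {p : P} (hp : N.L p = N'.L p) :
    Subsingleton ((quotRep (thinRep K (hasseQuiver P)) N N' h).M p) :=
  quot_subsingleton' hp

lemma liftQ_gMap (N N' : QSubRep (thinRep K (hasseQuiver P))) (h : QSubRep.le N N')
    (S : Finset P) (hS : ∀ p : P, p ∈ S ↔ (N.L p = ⊥ ∧ N'.L p = ⊤)) (p : P)
    (z : ↥(N'.L p)) :
    Submodule.liftQ (Submodule.comap (N'.L p).subtype (N.L p)) (gMap N' S p)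
      (gMap_ker N N' h S hS p) (Submodule.Quotient.mk z) = gMap N' S p z := rfl

lemma quot_repIso_MS (N N' : QSubRep (thinRep K (hasseQuiver P))) (h : QSubRep.le N N')
    (S : Finset P) (hS : ∀ p : P, p ∈ S ↔ (N.L p = ⊥ ∧ N'.L p = ⊤)) :
    RepIso (quotRep (thinRep K (hasseQuiver P)) N N' h) (MS K P S) := by
  have hbij : ∀ p : P, Function.Bijective
      (Submodule.liftQ (Submodule.comap (N'.L p).subtype (N.L p)) (gMap N' S p)
        (gMap_ker N N' h S hS p)) := by
    intro p
    by_cases hp : p ∈ S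
    · constructor
      · rw [← LinearMap.ker_eq_bot]
        apply Submodule.ker_liftQ_eq_bot
        intro x hx
        rw [LinearMap.mem_ker] at hx
        have hx1 := congrArg MSval hx
        rw [gMap_val hp, MSval_zero] at hx1
        rw [Submodule.mem_comap, ((hS p).mp hp).1, Submodule.mem_bot]
        exact hx1
      · intro y
        refine ⟨Submodule.Quotient.mk ⟨MSval (K := K) y, ?_⟩, ?_⟩
        · rw [((hS p).mp hp).2]; trivial
        · rw [Submodule.liftQ_apply]
          apply MSval_inj
          rw [gMap_val hp]
    · haveI := quot_subsingleton' (K := K) (thin_off N N' h hS hp)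
      haveI := MS_subsingleton (K := K) (P := P) hp
      constructor
      · intro a b hab
        exact Subsingleton.elim a b
      · intro y
        exact ⟨0, Subsingleton.elim _ _⟩
  refine ⟨fun p => LinearEquiv.ofBijective _ (hbij p), ?_⟩
  intro a x
  obtain ⟨z, rfl⟩ := Submodule.Quotient.mk_surjective _ x
  rw [quotThin_phi N N' h a z]
  simp only [LinearEquiv.ofBijective_apply]
  show gMap N' S ((hasseQuiver P).t a)
      ((((thinRep K (hasseQuiver P)).φ a).restrict (fun x hx => N'.compat a x hx)) z) =
    (MS K P S).φ a (gMap N' S ((hasseQuiver P).s a) z)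
  by_cases ht : (hasseQuiver P).t a ∈ S
  · by_cases hs : (hasseQuiver P).s a ∈ S
    · apply MSval_inj
      rw [gMap_val (P := P) ht, MS_phi_val a ⟨hs, ht⟩, gMap_val (P := P) hs]
      rfl
    · rw [gMap_zero' (P := P) hs]
      simp only [LinearMap.zero_apply, map_zero]
      apply MSval_inj
      rw [gMap_val (P := P) ht, MSval_zero]
      have hz : (z : (thinRep K (hasseQuiver P)).M ((hasseQuiver P).s a)) ∈
          N.L ((hasseQuiver P).s a) := by
        rw [thin_off N N' h hS hs]
        exact z.2
      have hc := N.compat a z.1 hz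
      rw [((hS _).mp ht).1, Submodule.mem_bot] at hc
      exact hc
  · haveI := MS_subsingleton (K := K) (P := P) ht
    exact Subsingleton.elim _ _
end QuotIso
section IndecTransport

variable {K : Type} [Field K] {Q : FinQuiver}

noncomputable def QSubRep.comapIso {R R' : QRep K Q} (f : ∀ i, R.M i ≃ₗ[K] R'.M i)
    (hf : ∀ (a : Q.A) (x : R.M (Q.s a)), f (Q.t a) (R.φ a x) = R'.φ a (f (Q.s a) x))
    (U : QSubRep R') : QSubRep R where
  L i := Submodule.comap (f i : R.M i →ₗ[K] R'.M i) (U.L i)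
  compat a x hx := by
    rw [Submodule.mem_comap] at hx ⊢
    rw [LinearEquiv.coe_coe, hf a x]
    exact U.compat a _ hx

lemma comap_equiv_ne_bot {M M' : Type*} [AddCommGroup M] [Module K M]
    [AddCommGroup M'] [Module K M'] (e : M ≃ₗ[K] M') {U : Submodule K M'}
    (hU : U ≠ ⊥) : Submodule.comap (e : M →ₗ[K] M') U ≠ ⊥ := by
  obtain ⟨u, hu, hune⟩ := (Submodule.ne_bot_iff U).mp hU
  refine (Submodule.ne_bot_iff _).mpr ⟨e.symm u, ?_, ?_⟩
  · rw [Submodule.mem_comap]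
    simpa using hu
  · intro h0
    apply hune
    have := congrArg e h0
    simpa using this

lemma comap_equiv_sup {M M' : Type*} [AddCommGroup M] [Module K M]
    [AddCommGroup M'] [Module K M'] (e : M ≃ₗ[K] M') (U W : Submodule K M') :
    Submodule.comap (e : M →ₗ[K] M') (U ⊔ W) =
      Submodule.comap (e : M →ₗ[K] M') U ⊔ Submodule.comap (e : M →ₗ[K] M') W := by
  rw [Submodule.comap_equiv_eq_map_symm, Submodule.comap_equiv_eq_map_symm,
    Submodule.comap_equiv_eq_map_symm, Submodule.map_sup]

lemma repIso_indec {R R' : QRep K Q} (hiso : RepIso R R') (h : Indecomposable R) :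
    Indecomposable R' := by
  obtain ⟨f, hf⟩ := hiso
  constructor
  · obtain ⟨i, hi⟩ := h.1
    exact ⟨i, by rw [← (f i).finrank_eq]; exact hi⟩
  · rintro ⟨U, W, ⟨i₀, hU⟩, ⟨i₁, hW⟩, hinf, hsup⟩
    refine h.2 ⟨QSubRep.comapIso f hf U, QSubRep.comapIso f hf W,
      ⟨i₀, comap_equiv_ne_bot (f i₀) hU⟩, ⟨i₁, comap_equiv_ne_bot (f i₁) hW⟩, ?_, ?_⟩
    · intro i
      show Submodule.comap _ (U.L i) ⊓ Submodule.comap _ (W.L i) = ⊥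
      rw [← Submodule.comap_inf, hinf i]
      simp
    · intro i
      show Submodule.comap _ (U.L i) ⊔ Submodule.comap _ (W.L i) = ⊤
      rw [← comap_equiv_sup, hsup i]
      simp

end IndecTransport

section MSIndec

variable {K : Type} [Field K] {P : Type} [PartialOrder P] [Fintype P] [DecidableEq P]

def FinsetConvex (S : Finset P) : Prop :=
  ∀ x z : P, x ∈ S → z ∈ S → ∀ y : P, x ≤ y → y ≤ z → y ∈ S

lemma covIn_covBy {S : Finset P} (hc : FinsetConvex S) {x y : P} (h : covIn S x y) :
    x ⋖ y := by
  obtain ⟨hx, hy, hlt, hmax⟩ := h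
  exact ⟨hlt, fun z hz1 hz2 => hmax z (hc x y hx hy z (le_of_lt hz1) (le_of_lt hz2)) ⟨hz1, hz2⟩⟩

lemma covBy_covIn {S : Finset P} {x y : P} (hx : x ∈ S) (hy : y ∈ S) (h : x ⋖ y) :
    covIn S x y :=
  ⟨hx, hy, h.1, fun z _ hz => h.2 hz.1 hz.2⟩

lemma arrow_cov (a : (hasseQuiver P).A) :
    a.1.1 ⋖ a.1.2 := a.2

lemma MS_indecomposable {S : Finset P} (hne : S.Nonempty) (hconv : FinsetConvex S)
    (hconn : connectedIn S) : Indecomposable (MS K P S) := by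
  constructor
  · obtain ⟨p, hp⟩ := hne
    exact ⟨p, by rw [MS_finrank hp]; norm_num⟩
  · rintro ⟨U, W, ⟨i₀, hU⟩, ⟨i₁, hW⟩, hinf, hsup⟩
    have memS : ∀ {q : P} {V : QSubRep (MS K P S)}, V.L q ≠ ⊥ → q ∈ S := by
      intro q V hq
      by_contra hqS
      haveI := MS_subsingleton (K := K) (P := P) hqS
      exact hq (sub_eq_bot_of_subsingleton _)
    have hi₀ : i₀ ∈ S := memS hU
    have hi₁ : i₁ ∈ S := memS hW
    have hnb : ∀ {q : P}, q ∈ S → U.L q ≠ ⊥ → W.L q ≠ ⊥ → False := by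
      intro q hq h1 h2
      exact not_both_rank1 (MS_finrank hq) (hinf q) h1 h2
    have hUi₁ : U.L i₁ = ⊥ := by
      by_contra hne'
      exact hnb hi₁ hne' hW
    have hpath := hconn i₀ hi₀ i₁ hi₁
    obtain ⟨u, v, he, huA, hvA⟩ :=
      crossing (Pr := fun q : P => U.L q ≠ ⊥) hpath hU (fun hh => hh hUi₁)
    have hUv : U.L v = ⊥ := not_not.mp hvA
    have huS : u ∈ S := by rcases he with h | h; exacts [h.1, h.2.1]
    have hvS : v ∈ S := by rcases he with h | h; exacts [h.2.1, h.1]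
    have hWv : W.L v = ⊤ := by
      have hs := hsup v
      rw [hUv, bot_sup_eq] at hs
      exact hs
    rcases he with hcov | hcov
    · -- u ⋖ v (in P by convexity); arrow from v down to u; push W down
      have hcb : u ⋖ v := covIn_covBy hconv hcov
      have h1 : MSone (K := K) hvS ∈ W.L v := by rw [hWv]; trivial
      have h2 : (MS K P S).φ (covArrow hcb) (MSone (K := K) hvS) ∈ W.L u :=
        W.compat (covArrow hcb) _ h1
      have h3 : (MS K P S).φ (covArrow hcb) (MSone (K := K) hvS) ≠ 0 := by
        intro h0
        have h4 := congrArg MSval h0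
        rw [MS_phi_val (covArrow hcb) ⟨hvS, huS⟩, MSone_val, MSval_zero] at h4
        exact one_ne_zero h4
      have hWu : W.L u ≠ ⊥ := by
        intro h0
        rw [h0, Submodule.mem_bot] at h2
        exact h3 h2
      exact hnb huS huA hWu
    · -- v ⋖ u; arrow from u down to v; push U down
      have hcb : v ⋖ u := covIn_covBy hconv hcov
      obtain ⟨zu, hzu, hzne⟩ := (Submodule.ne_bot_iff _).mp huA
      have h2 : (MS K P S).φ (covArrow hcb) zu ∈ U.L v :=
        U.compat (covArrow hcb) zu hzu
      rw [hUv, Submodule.mem_bot] at h2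
      have h4 := congrArg MSval h2
      rw [MS_phi_val (covArrow hcb) ⟨huS, hvS⟩, MSval_zero] at h4
      exact hzne (MSval_inj (h4.trans MSval_zero.symm))

lemma connectedIn_of_MS_indec {S : Finset P} (h : Indecomposable (MS K P S)) :
    connectedIn S := by
  intro x hx y hy
  by_contra hxy
  set e : P → P → Prop := fun u v => covIn S u v ∨ covIn S v u with he
  set Acond : P → Prop := fun p => Relation.ReflTransGen e x p ∧ p ∈ S with hA
  have hcompatU : ∀ (a : (hasseQuiver P).A) (v : (MS K P S).M ((hasseQuiver P).s a)),
      v ∈ (if Acond ((hasseQuiver P).s a) then (⊤ : Submodule K ((MS K P S).M ((hasseQuiver P).s a))) else ⊥) →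
      (MS K P S).φ a v ∈ (if Acond ((hasseQuiver P).t a) then (⊤ : Submodule K ((MS K P S).M ((hasseQuiver P).t a))) else ⊥) := by
    intro a v hv
    by_cases hs : Acond ((hasseQuiver P).s a)
    · by_cases hts : (hasseQuiver P).t a ∈ S
      · have hcov : covIn S ((hasseQuiver P).t a) ((hasseQuiver P).s a) :=
          covBy_covIn hts hs.2 a.2
        have hAt : Acond ((hasseQuiver P).t a) :=
          ⟨Relation.ReflTransGen.tail hs.1 (Or.inr hcov), hts⟩
        rw [if_pos hAt]
        trivial
      · rw [MS_phi_zero a (fun hc => hts hc.2)]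
        simp only [LinearMap.zero_apply]
        exact Submodule.zero_mem _
    · rw [if_neg hs, Submodule.mem_bot] at hv
      rw [hv, map_zero]
      exact Submodule.zero_mem _
  have hcompatW : ∀ (a : (hasseQuiver P).A) (v : (MS K P S).M ((hasseQuiver P).s a)),
      v ∈ (if ((hasseQuiver P).s a ∈ S ∧ ¬ Acond ((hasseQuiver P).s a)) then (⊤ : Submodule K ((MS K P S).M ((hasseQuiver P).s a))) else ⊥) →
      (MS K P S).φ a v ∈ (if ((hasseQuiver P).t a ∈ S ∧ ¬ Acond ((hasseQuiver P).t a)) then (⊤ : Submodule K ((MS K P S).M ((hasseQuiver P).t a))) else ⊥) := by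
    intro a v hv
    by_cases hs : (hasseQuiver P).s a ∈ S ∧ ¬ Acond ((hasseQuiver P).s a)
    · by_cases hts : (hasseQuiver P).t a ∈ S
      · have hcov : covIn S ((hasseQuiver P).t a) ((hasseQuiver P).s a) :=
          covBy_covIn hts hs.1 a.2
        have hAt : ¬ Acond ((hasseQuiver P).t a) := by
          intro hAc
          exact hs.2 ⟨Relation.ReflTransGen.tail hAc.1 (Or.inl hcov), hs.1⟩
        rw [if_pos ⟨hts, hAt⟩]
        trivial
      · rw [MS_phi_zero a (fun hc => hts hc.2)]
        simp only [LinearMap.zero_apply]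
        exact Submodule.zero_mem _
    · rw [if_neg hs, Submodule.mem_bot] at hv
      rw [hv, map_zero]
      exact Submodule.zero_mem _
  refine h.2 ⟨⟨fun p => if Acond p then ⊤ else ⊥, hcompatU⟩,
    ⟨fun p => if (p ∈ S ∧ ¬ Acond p) then ⊤ else ⊥, hcompatW⟩, ⟨x, ?_⟩, ⟨y, ?_⟩, ?_, ?_⟩
  · show (if Acond x then (⊤ : Submodule K ((MS K P S).M x)) else ⊥) ≠ ⊥
    rw [if_pos ⟨Relation.ReflTransGen.refl, hx⟩]
    exact MS_top_ne_bot hx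
  · show (if (y ∈ S ∧ ¬ Acond y) then (⊤ : Submodule K ((MS K P S).M y)) else ⊥) ≠ ⊥
    rw [if_pos ⟨hy, fun hc => hxy hc.1⟩]
    exact MS_top_ne_bot hy
  · intro p
    show (if Acond p then (⊤ : Submodule K ((MS K P S).M p)) else ⊥) ⊓
      (if (p ∈ S ∧ ¬ Acond p) then ⊤ else ⊥) = ⊥
    by_cases hp : Acond p
    · rw [if_pos hp, if_neg (fun hc => hc.2 hp)]
      simp
    · rw [if_neg hp]
      simp
  · intro p
    show (if Acond p then (⊤ : Submodule K ((MS K P S).M p)) else ⊥) ⊔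
      (if (p ∈ S ∧ ¬ Acond p) then ⊤ else ⊥) = ⊤
    by_cases hpS : p ∈ S
    · by_cases hp : Acond p
      · rw [if_pos hp]
        simp
      · rw [if_neg hp, if_pos ⟨hpS, hp⟩]
        simp
    · haveI := MS_subsingleton (K := K) (P := P) hpS
      rw [if_neg (fun hc => hpS hc.2), if_neg (fun hc => hpS hc.1)]
      rw [sup_idem]
      exact bot_eq_top_of_subsingleton

lemma block_convex {k : ℕ} {B : Fin k → Finset P} (hpart : IsFinPartition k B)
    (hcomp : compatiblePart B) (i : Fin k) : FinsetConvex (B i) := by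
  intro x z hx hz y hxy hyz
  obtain ⟨j, hj⟩ := hpart.2.2 y
  have h1 : blockRel B i j := ⟨x, hx, y, hj, hxy⟩
  have h2 : blockRel B j i := ⟨y, hj, z, hz, hyz⟩
  have hij : i = j := hcomp i j (.single h1) (.single h2)
  rwa [hij]

end MSIndec
/-- For a finite connected poset `P`: (1) every connected compatible
partition of `P` gives (after reordering by a permutation) a filtration of `M_P` by
subrepresentations whose successive quotients are the (indecomposable) representations
`M_{P_i}`; (2) conversely, every filtration of `M_P` with indecomposable successive
quotients arises in this way from a connected compatible partition. -/
theorem filtrations_of_MP_are_connected_compatible_partitions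
    (K : Type) [Field K] (P : Type) [PartialOrder P] [Fintype P] [DecidableEq P]
    (hP : posetConnected P) :
    (∀ (k : ℕ) (B : Fin k → Finset P), IsFinPartition k B →
      (∀ i, connectedIn (B i)) → compatiblePart B →
      (∀ i, Indecomposable (MS K P (B i))) ∧
        ∃ (σ : Equiv.Perm (Fin k)) (F : Fin (k + 1) → QSubRep (thinRep K (hasseQuiver P))),
          (∀ p, (F 0).L p = ⊥) ∧ (∀ p, (F (Fin.last k)).L p = ⊤) ∧
          ∃ hm : ∀ j : Fin k, QSubRep.le (F j.castSucc) (F j.succ),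
            ∀ j : Fin k,
              RepIso (quotRep (thinRep K (hasseQuiver P)) (F j.castSucc) (F j.succ) (hm j))
                (MS K P (B (σ j)))) ∧
    ∀ (k : ℕ) (F : Fin (k + 1) → QSubRep (thinRep K (hasseQuiver P)))
      (hm : ∀ j : Fin k, QSubRep.le (F j.castSucc) (F j.succ)),
      (∀ p, (F 0).L p = ⊥) → (∀ p, (F (Fin.last k)).L p = ⊤) →
      (∀ j : Fin k, Indecomposable
        (quotRep (thinRep K (hasseQuiver P)) (F j.castSucc) (F j.succ) (hm j))) →
      ∃ B : Fin k → Finset P, IsFinPartition k B ∧ (∀ i, connectedIn (B i)) ∧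
        compatiblePart B ∧
        ∀ j : Fin k,
          RepIso (quotRep (thinRep K (hasseQuiver P)) (F j.castSucc) (F j.succ) (hm j))
            (MS K P (B j)) := by
  constructor
  · -- Part (1)
    intro k B hpart hconn hcomp
    obtain ⟨hBne, hBdisj, hBcov⟩ := hpart
    have hconv : ∀ i, FinsetConvex (B i) :=
      block_convex ⟨hBne, hBdisj, hBcov⟩ hcomp
    refine ⟨fun i => MS_indecomposable (hBne i) (hconv i) (hconn i), ?_⟩
    set r : Fin k → Fin k → Prop := Relation.TransGen (blockRel B) with hrdef
    haveI hpo : IsPartialOrder (Fin k) r :=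
      { refl := fun i => by
          obtain ⟨p, hp⟩ := hBne i
          exact Relation.TransGen.single ⟨p, hp, p, hp, le_refl p⟩
        trans := fun a b c hab hbc => Relation.TransGen.trans hab hbc
        antisymm := hcomp }
    obtain ⟨s, hlin, hrs⟩ := extend_partialOrder r
    haveI := hlin
    haveI : DecidableRel s := fun a b => Classical.propDecidable _
    set l := Finset.univ.sort s with hl
    have hlen : l.length = k := by
      rw [hl, Finset.length_sort, Finset.card_univ, Fintype.card_fin]
    have hnodup : l.Nodup := Finset.sort_nodup Finset.univ s
    have hsorted : l.Pairwise s := Finset.pairwise_sort Finset.univ s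
    set σ₀ : Fin k → Fin k := fun m => l.get (Fin.cast hlen.symm m) with hσ₀
    have hinj : Function.Injective σ₀ := by
      intro m m' hmm
      have h2 := List.nodup_iff_injective_get.mp hnodup hmm
      have h3 := congrArg Fin.val h2
      simp only [Fin.coe_cast] at h3
      exact Fin.ext h3
    have hsurj : Function.Surjective σ₀ := hinj.bijective_of_finite.2
    have hkey : ∀ m m' : Fin k, r (σ₀ m') (σ₀ m) → m' ≤ m := by
      intro m m' hrel
      by_contra hlt
      push_neg at hlt
      have hs1 : s (σ₀ m) (σ₀ m') := by
        apply hsorted.rel_get_of_lt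
        exact Fin.lt_def.mpr (Fin.lt_def.mp hlt)
      have hs2 : s (σ₀ m') (σ₀ m) := hrs _ _ hrel
      have heq2 : σ₀ m = σ₀ m' := _root_.antisymm hs1 hs2
      exact absurd (hinj heq2) (ne_of_lt hlt)
    set T : Fin (k+1) → Finset P :=
      (fun j => Finset.univ.filter (fun p => ∃ m : Fin k, (m : ℕ) < (j : ℕ) ∧ p ∈ B (σ₀ m)))
      with hT
    have hTmem : ∀ (j : Fin (k+1)) (p : P),
        p ∈ T j ↔ ∃ m : Fin k, (m : ℕ) < (j : ℕ) ∧ p ∈ B (σ₀ m) := by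
      intro j p
      simp [hT]
    have hTlow : ∀ j : Fin (k+1), ∀ x y : P, x ⋖ y → y ∈ T j → x ∈ T j := by
      intro j x y hxy hy
      rw [hTmem] at hy ⊢
      obtain ⟨m, hmj, hyB⟩ := hy
      obtain ⟨i, hiB⟩ := hBcov x
      obtain ⟨m', hm'⟩ := hsurj i
      subst hm'
      have hrel : r (σ₀ m') (σ₀ m) :=
        Relation.TransGen.single ⟨x, hiB, y, hyB, le_of_lt hxy.1⟩
      exact ⟨m', lt_of_le_of_lt (Fin.le_def.mp (hkey m m' hrel)) hmj, hiB⟩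
    refine ⟨Equiv.ofBijective σ₀ ⟨hinj, hsurj⟩, fun j => lowerSubRep (T j) (hTlow j),
      ?_, ?_, fun j => lowerSubRep_le _ _ ?_, fun j => ?_⟩
    · intro p
      show (lowerSubRep (T 0) (hTlow 0)).L p = ⊥
      rw [lowerSubRep_L, if_neg]
      intro hc
      rw [hTmem] at hc
      obtain ⟨m, hmlt, -⟩ := hc
      simp at hmlt
    · intro p
      show (lowerSubRep (T (Fin.last k)) (hTlow (Fin.last k))).L p = ⊤
      rw [lowerSubRep_L, if_pos]
      rw [hTmem]
      obtain ⟨i, hiB⟩ := hBcov p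
      obtain ⟨m', hm'⟩ := hsurj i
      exact ⟨m', by simp [Fin.val_last, m'.isLt], hm' ▸ hiB⟩
    · -- monotone
      intro p hp
      rw [hTmem] at hp ⊢
      obtain ⟨m, hmlt, hmB⟩ := hp
      refine ⟨m, ?_, hmB⟩
      simp only [Fin.coe_castSucc, Fin.val_succ] at hmlt ⊢
      omega
    · -- iso
      apply quot_repIso_MS
      intro p
      constructor
      · intro hpB
        constructor
        · show (if p ∈ T j.castSucc then (⊤ : Submodule K K) else ⊥) = ⊥
          rw [if_neg]
          intro hc
          rw [hTmem] at hc
          obtain ⟨m, hmlt, hmB⟩ := hc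
          have hmne : σ₀ m ≠ σ₀ j := by
            intro hEq
            have hmj := hinj hEq
            rw [hmj] at hmlt
            simp at hmlt
          exact (Finset.disjoint_left.mp (hBdisj _ _ hmne) hmB) hpB
        · show (if p ∈ T j.succ then (⊤ : Submodule K K) else ⊥) = ⊤
          rw [if_pos]
          rw [hTmem]
          exact ⟨j, by simp [Fin.val_succ, Fin.coe_castSucc], hpB⟩
      · rintro ⟨hb, ht⟩
        rw [lowerSubRep_L] at hb ht
        by_cases hpt : p ∈ T j.succ
        · rw [hTmem] at hpt
          obtain ⟨m, hmlt, hmB⟩ := hpt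
          have hmj : m = j := by
            by_contra hne'
            have hne'' : (m : ℕ) ≠ (j : ℕ) := fun hh => hne' (Fin.ext hh)
            have hmlt2 : (m : ℕ) < (j.castSucc : ℕ) := by
              simp only [Fin.val_succ] at hmlt
              simp only [Fin.coe_castSucc]
              omega
            have hpT : p ∈ T j.castSucc := by
              rw [hTmem]
              exact ⟨m, hmlt2, hmB⟩
            rw [if_pos hpT] at hb
            exact absurd hb.symm subK_bot_ne_top
          rw [hmj] at hmB
          exact hmB
        · rw [if_neg hpt] at ht
          exact absurd ht subK_bot_ne_top
  · -- Part (2)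
    intro k F hm h0 hlast hindec
    have heq : ∀ (j : Fin k) (p : P),
        ¬((F j.castSucc).L p = ⊥ ∧ (F j.succ).L p = ⊤) →
        (F j.castSucc).L p = (F j.succ).L p := by
      intro j p hnp
      rcases thin_L_cases (F j.succ) p with h' | h'
      · have hb : (F j.castSucc).L p = ⊥ := le_bot_iff.mp (h' ▸ hm j p)
        rw [hb, h']
      · rcases thin_L_cases (F j.castSucc) p with h0' | h0'
        · exact absurd ⟨h0', h'⟩ hnp
        · rw [h0', h']
    set Bf : Fin k → Finset P := (fun j =>
      Finset.univ.filter (fun p => (F j.castSucc).L p = ⊥ ∧ (F j.succ).L p = ⊤)) with hBf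
    have hBfmem : ∀ (j : Fin k) (p : P),
        p ∈ Bf j ↔ ((F j.castSucc).L p = ⊥ ∧ (F j.succ).L p = ⊤) := by
      intro j p
      simp only [hBf, Finset.mem_filter, Finset.mem_univ, true_and]
    have hiso : ∀ j : Fin k,
        RepIso (quotRep (thinRep K (hasseQuiver P)) (F j.castSucc) (F j.succ) (hm j))
          (MS K P (Bf j)) :=
      fun j => quot_repIso_MS _ _ (hm j) _ (hBfmem j)
    have step : ∀ (j : Fin k) (p : P), (F j.castSucc).L p = ⊤ → (F j.succ).L p = ⊤ := by
      intro j p hp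
      have h := hm j p
      rw [hp] at h
      exact top_unique h
    have hmono : ∀ (i j : Fin (k+1)), i ≤ j → ∀ p, (F i).L p = ⊤ → (F j).L p = ⊤ := by
      intro i j
      induction j using Fin.induction with
      | zero =>
        intro hij p hp
        have hi0 : i = 0 := le_antisymm hij (Fin.zero_le i)
        rwa [hi0] at hp
      | succ j ih =>
        intro hij p hp
        by_cases hij' : i = j.succ
        · rwa [hij'] at hp
        · have hle : i ≤ j.castSucc := by
            rw [Fin.le_def] at hij ⊢
            simp only [Fin.val_succ] at hij
            simp only [Fin.coe_castSucc]
            have hne2 : (i : ℕ) ≠ (j : ℕ) + 1 := by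
              intro hh
              exact hij' (Fin.ext (by simp [Fin.val_succ, hh]))
            omega
          exact step j p (ih hle p hp)
    have hBfne : ∀ j, (Bf j).Nonempty := by
      intro j
      obtain ⟨p, hp⟩ := (hindec j).1
      refine ⟨p, (hBfmem j p).mpr ?_⟩
      by_contra hc
      haveI := quotThin_subsingleton (F j.castSucc) (F j.succ) (hm j) (heq j p hc)
      exact hp Module.finrank_zero_of_subsingleton
    have hdiag : ∀ (i j : Fin k), i < j → ∀ p ∈ Bf i, p ∉ Bf j := by
      intro i j hij p hpi hpj
      have h1 : (F i.succ).L p = ⊤ := ((hBfmem i p).mp hpi).2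
      have h2 : (F j.castSucc).L p = ⊤ := by
        refine hmono i.succ j.castSucc ?_ p h1
        rw [Fin.le_def]
        simp only [Fin.val_succ, Fin.coe_castSucc]
        have := Fin.lt_def.mp hij
        omega
      have h3 := ((hBfmem j p).mp hpj).1
      rw [h2] at h3
      exact subK_bot_ne_top h3.symm
    have hcover : ∀ p : P, ∃ j : Fin k, p ∈ Bf j := by
      intro p
      have hQk : ∃ hn : k < k + 1, (F ⟨k, hn⟩).L p = ⊤ :=
        ⟨Nat.lt_succ_self k, hlast p⟩
      have Qex : ∃ n : ℕ, ∃ hn : n < k + 1, (F ⟨n, hn⟩).L p = ⊤ := ⟨k, hQk⟩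
      obtain ⟨hn₀lt, hn₀top⟩ := Nat.find_spec Qex
      have hn₀le : Nat.find Qex ≤ k := Nat.find_min' Qex hQk
      have hn₀ne : Nat.find Qex ≠ 0 := by
        intro hz
        have hzz : (F 0).L p = ⊤ := by
          rw [show (0 : Fin (k+1)) = ⟨Nat.find Qex, hn₀lt⟩ from Fin.ext (by rw [Fin.val_zero]; exact hz.symm)]
          exact hn₀top
        rw [h0 p] at hzz
        exact subK_bot_ne_top hzz
      refine ⟨⟨Nat.find Qex - 1, by omega⟩, (hBfmem _ p).mpr ⟨?_, ?_⟩⟩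
      · have hmin : ¬ ∃ hn : (Nat.find Qex - 1) < k + 1, (F ⟨Nat.find Qex - 1, hn⟩).L p = ⊤ :=
          Nat.find_min Qex (by omega)
        rcases thin_L_cases (F (Fin.castSucc ⟨Nat.find Qex - 1, by omega⟩)) p with hb | ht'
        · exact hb
        · exfalso
          apply hmin
          refine ⟨by omega, ?_⟩
          rw [show (⟨Nat.find Qex - 1, by omega⟩ : Fin (k+1)) =
            Fin.castSucc ⟨Nat.find Qex - 1, by omega⟩ from Fin.ext (by simp)]
          exact ht'
      · rw [show Fin.succ ⟨Nat.find Qex - 1, by omega⟩ = (⟨Nat.find Qex, hn₀lt⟩ : Fin (k+1))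
          from Fin.ext (by rw [Fin.val_succ]; exact Nat.sub_add_cancel (Nat.one_le_iff_ne_zero.mpr hn₀ne))]
        exact hn₀top
    have hrel_le : ∀ i j : Fin k, blockRel Bf i j → i ≤ j := by
      rintro i j ⟨p, hp, q, hq, hpq⟩
      by_contra hji
      push_neg at hji
      have hq1 : (F j.succ).L q = ⊤ := ((hBfmem j q).mp hq).2
      have hq2 : (F i.castSucc).L q = ⊤ := by
        refine hmono j.succ i.castSucc ?_ q hq1
        rw [Fin.le_def]
        simp only [Fin.val_succ, Fin.coe_castSucc]
        have := Fin.lt_def.mp hji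
        omega
      have hp2 : (F i.castSucc).L p = ⊤ := thin_sub_top_of_le _ hpq hq2
      have hp3 := ((hBfmem i p).mp hp).1
      rw [hp2] at hp3
      exact subK_bot_ne_top hp3.symm
    have htle : ∀ i j : Fin k, Relation.TransGen (blockRel Bf) i j → i ≤ j := by
      intro i j hij
      induction hij with
      | single h => exact hrel_le _ _ h
      | tail h1 h2 ih => exact le_trans ih (hrel_le _ _ h2)
    refine ⟨Bf, ⟨hBfne, ?_, hcover⟩, ?_, ?_, hiso⟩
    · intro i j hne
      rw [Finset.disjoint_left]
      intro p hpi hpj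
      rcases lt_trichotomy i j with hlt | heq' | hgt
      · exact hdiag i j hlt p hpi hpj
      · exact hne heq'
      · exact hdiag j i hgt p hpj hpi
    · intro j
      exact connectedIn_of_MS_indec (repIso_indec (hiso j) (hindec j))
    · intro i j h1 h2
      exact le_antisymm (htle _ _ h1) (htle _ _ h2)
end
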